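/- arXiv:1112.5456 — 4 statements merged into one kernel-verified Lean document; each statement's English description precedes it below -/
import Mathlib

section
/- (Selective value of threshold games) For j ∈ {1,...,n}, let G_j = (ϱ_j, σ_j) be weighted quantum retrieval games with utility functions valued in [0,1], finite nonempty answer sets, positive definite reduced density matrices, and Sel(G_j) = δ_j. Set δ = (1/n)∑_{j=1}^n δ_j, and let γ satisfy δ ≤ γ ≤ 1 with γ·n an integer. Define the threshold game G_γ whose ensemble is the n-fold tensor product ⊗_j ϱ_j (on the Kronecker product space, indexed over S₁×...×S_n) and whose {0,1}-valued utility is σ_γ(s⃗, a⃗) = 1 if ∑_{j=1}^n σ_j(s_j, a_j) ≥ γ·n and 0 otherwise. Then Sel(G_γ) ≤ 2·exp(−n·D(γ‖δ)). -/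
open Matrix
open scoped ComplexOrder
open scoped ComplexOrder

namespace QRG

variable {n S A : Type*}

/-- The normalization `∑_{s,a} Tr[P(a)ϱ(s)]` of the distribution induced by an
indexed ensemble `ϱ` and a selective projection `P`. -/
noncomputable def normZ [Fintype n] [Fintype S] [Fintype A]
    (ϱ : S → Matrix n n ℂ) (P : A → Matrix n n ℂ) : ℝ :=
  ∑ s, ∑ a, (Matrix.trace (P a * ϱ s)).re

/-- The induced probability distribution `⟨ϱ, P⟩(s,a) = Tr[P(a)ϱ(s)] / normZ`. -/
noncomputable def induced [Fintype n] [Fintype S] [Fintype A]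
    (ϱ : S → Matrix n n ℂ) (P : A → Matrix n n ℂ) (s : S) (a : A) : ℝ :=
  (Matrix.trace (P a * ϱ s)).re / normZ ϱ P

/-- The value `Val(G,P) = ∑_{s,a} p(s,a)·σ(s,a)` of the game `G = (ϱ,σ)` with
respect to the projection `P`. -/
noncomputable def val [Fintype n] [Fintype S] [Fintype A]
    (ϱ : S → Matrix n n ℂ) (σ : S → A → ℝ) (P : A → Matrix n n ℂ) : ℝ :=
  ∑ s, ∑ a, induced ϱ P s a * σ s a

/-- The selective value `Sel(G)`: the supremum of `Val(G,P)` over all selective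
projections `P` (families of positive semidefinite matrices) with positive
normalization. -/
noncomputable def sel [Fintype n] [Fintype S] [Fintype A]
    (ϱ : S → Matrix n n ℂ) (σ : S → A → ℝ) : ℝ :=
  sSup {v | ∃ P : A → Matrix n n ℂ,
    (∀ a, (P a).PosSemidef) ∧ 0 < normZ ϱ P ∧ v = val ϱ σ P}

/-- The physical value `Phys(G)`: the supremum of `Val(G,P)` over all physical
projections `P` (selective projections with `∑_a P(a) = 1`). -/
noncomputable def phys [Fintype n] [DecidableEq n] [Fintype S] [Fintype A]
    (ϱ : S → Matrix n n ℂ) (σ : S → A → ℝ) : ℝ :=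
  sSup {v | ∃ P : A → Matrix n n ℂ,
    (∀ a, (P a).PosSemidef) ∧ (∑ a, P a) = 1 ∧ v = val ϱ σ P}

end QRG

open QRG

/-- Binary relative entropy `D(p‖q)`, with the conventions `0·log 0 = 0` and
`0·log(0/0) = 0`. -/
noncomputable def binRelEnt (p q : ℝ) : ℝ :=
  p * Real.log (p / q) + (1 - p) * Real.log ((1 - p) / (1 - q))

/-! ### Auxiliary lemmas -/

set_option linter.unusedSectionVars false

section Aux

open Matrix
open scoped ComplexOrder

lemma cre_le {z w : ℂ} (h : z ≤ w) : z.re ≤ w.re := (Complex.le_def.mp h).1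

lemma cre_nonneg {z : ℂ} (h : 0 ≤ z) : 0 ≤ z.re := by
  simpa using cre_le h

lemma ofReal_mul_re (r : ℝ) (z : ℂ) : ((r : ℂ) * z).re = r * z.re := by
  simp [Complex.mul_re]

variable {m : Type*} [Fintype m] [DecidableEq m]

section SqrtPort
open scoped MatrixOrder

noncomputable def Matrix.PosSemidef.sqrt {Q : Matrix m m ℂ} (_hQ : Q.PosSemidef) :
    Matrix m m ℂ := CFC.sqrt Q

lemma Matrix.PosSemidef.posSemidef_sqrt {Q : Matrix m m ℂ} (hQ : Q.PosSemidef) :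
    hQ.sqrt.PosSemidef := (CFC.sqrt_nonneg Q).posSemidef

lemma Matrix.PosSemidef.sqrt_mul_self {Q : Matrix m m ℂ} (hQ : Q.PosSemidef) :
    hQ.sqrt * hQ.sqrt = Q := CFC.sqrt_mul_sqrt_self Q hQ.nonneg

end SqrtPort

lemma trace_conjTranspose_mul_self_nonneg (Z : Matrix m m ℂ) :
    0 ≤ Matrix.trace (Zᴴ * Z) := by
  rw [Matrix.trace]
  refine Finset.sum_nonneg fun i _ => ?_
  rw [Matrix.diag_apply, Matrix.mul_apply]
  refine Finset.sum_nonneg fun k _ => ?_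
  simpa [Matrix.conjTranspose_apply] using star_mul_self_nonneg (Z k i)

lemma trace_psd_mul_nonneg {Q B : Matrix m m ℂ} (hQ : Q.PosSemidef) (hB : B.PosSemidef) :
    0 ≤ Matrix.trace (Q * B) := by
  have hq := hQ.sqrt_mul_self
  have hb := hB.sqrt_mul_self
  set q := hQ.sqrt with hqdef
  set b := hB.sqrt with hbdef
  have hqh : qᴴ = q := hQ.posSemidef_sqrt.isHermitian
  have hbh : bᴴ = b := hB.posSemidef_sqrt.isHermitian
  have key : Q * B = q * (q * b * b) := by
    rw [← hq, ← hb]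
    simp only [Matrix.mul_assoc]
  rw [key, Matrix.trace_mul_comm]
  rw [show q * b * b * q = (b * q)ᴴ * (b * q) from by
    rw [Matrix.conjTranspose_mul, hqh, hbh]; simp only [Matrix.mul_assoc]]
  exact trace_conjTranspose_mul_self_nonneg _

lemma trace_re_mono {Q X Y : Matrix m m ℂ} (hQ : Q.PosSemidef) (hXY : (Y - X).PosSemidef) :
    (Matrix.trace (Q * X)).re ≤ (Matrix.trace (Q * Y)).re := by
  have h := trace_psd_mul_nonneg hQ hXY
  rw [Matrix.mul_sub, Matrix.trace_sub] at h
  have h2 := cre_nonneg h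
  rw [Complex.sub_re] at h2
  linarith

lemma trace_vecMulVec_mul (v : m → ℂ) (B : Matrix m m ℂ) :
    Matrix.trace (Matrix.vecMulVec v (star v) * B) = star v ⬝ᵥ B *ᵥ v := by
  simp only [Matrix.trace, Matrix.diag_apply, Matrix.mul_apply, Matrix.vecMulVec_apply,
    dotProduct, Matrix.mulVec, Pi.star_apply, Finset.mul_sum]
  rw [Finset.sum_comm]
  exact Finset.sum_congr rfl fun k _ => Finset.sum_congr rfl fun i _ => by ring

lemma vecMulVec_posSemidef (v : m → ℂ) : (Matrix.vecMulVec v (star v)).PosSemidef := by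
  rw [Matrix.posSemidef_iff_dotProduct_mulVec]
  constructor
  · ext i j
    simp [Matrix.conjTranspose_apply, Matrix.vecMulVec_apply, mul_comm]
  · intro x
    have h1 : (Matrix.vecMulVec v (star v)) *ᵥ x = (star v ⬝ᵥ x) • v := by
      ext i
      simp only [Matrix.mulVec, dotProduct, Matrix.vecMulVec_apply, Pi.smul_apply,
        smul_eq_mul, Finset.sum_mul]
      exact Finset.sum_congr rfl fun j _ => by ring
    have key : star x ⬝ᵥ (Matrix.vecMulVec v (star v)) *ᵥ x
        = star (star v ⬝ᵥ x) * (star v ⬝ᵥ x) := by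
      rw [h1, dotProduct_smul, smul_eq_mul,
        show star x ⬝ᵥ v = star (star v ⬝ᵥ x) from star_dotProduct x v]
      ring
    rw [key]
    exact star_mul_self_nonneg _

lemma psd_smul {A : Matrix m m ℂ} {c : ℝ} (hA : A.PosSemidef) (hc : 0 ≤ c) :
    ((c : ℂ) • A).PosSemidef := by
  rw [Matrix.posSemidef_iff_dotProduct_mulVec]
  constructor
  · show ((c : ℂ) • A)ᴴ = (c : ℂ) • A
    rw [Matrix.conjTranspose_smul, hA.1.eq]
    simp
  · intro x
    rw [Matrix.smul_mulVec, dotProduct_smul, smul_eq_mul]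
    exact mul_nonneg (Complex.zero_le_real.mpr hc) (hA.dotProduct_mulVec_nonneg x)

lemma psd_sum {ι' : Type*} (s : Finset ι') (f : ι' → Matrix m m ℂ)
    (h : ∀ i ∈ s, (f i).PosSemidef) : (∑ i ∈ s, f i).PosSemidef :=
  Finset.sum_induction f _ (fun _ _ ha hb => ha.add hb) Matrix.PosSemidef.zero h

end Aux

/-! ### Big tensor products -/

section BigTensor

open Matrix
open scoped ComplexOrder

variable {k : Type*} [Fintype k] [DecidableEq k]
variable {d : k → Type*} [∀ j, Fintype (d j)] [∀ j, DecidableEq (d j)]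

/-- The `k`-fold Kronecker product of a family of matrices. -/
def bT (N : ∀ j, Matrix (d j) (d j) ℂ) : Matrix (∀ j, d j) (∀ j, d j) ℂ :=
  fun x y => ∏ j, N j (x j) (y j)

lemma bT_conjTranspose (N : ∀ j, Matrix (d j) (d j) ℂ) :
    (bT N)ᴴ = bT (fun j => (N j)ᴴ) := by
  ext x y
  simp [bT, Matrix.conjTranspose_apply, star_prod]

lemma bT_mul (N M : ∀ j, Matrix (d j) (d j) ℂ) :
    bT (fun j => N j * M j) = bT N * bT M := by
  ext x y
  simp only [bT, Matrix.mul_apply]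
  rw [Fintype.prod_sum (fun j t => N j (x j) t * M j t (y j))]
  exact Finset.sum_congr rfl fun z _ => by rw [Finset.prod_mul_distrib]

lemma bT_posSemidef {N : ∀ j, Matrix (d j) (d j) ℂ} (h : ∀ j, (N j).PosSemidef) :
    (bT N).PosSemidef := by
  have hN : N = fun j => ((h j).sqrt)ᴴ * (h j).sqrt := by
    funext j
    rw [(h j).posSemidef_sqrt.1, (h j).sqrt_mul_self]
  rw [hN, bT_mul (fun j => ((h j).sqrt)ᴴ) (fun j => (h j).sqrt), ← bT_conjTranspose]
  exact Matrix.posSemidef_conjTranspose_mul_self _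

lemma bT_smul (c : k → ℝ) (R : ∀ j, Matrix (d j) (d j) ℂ) :
    bT (fun j => (c j : ℂ) • R j) = ((∏ j, c j : ℝ) : ℂ) • bT R := by
  ext x y
  simp only [bT, Matrix.smul_apply, smul_eq_mul]
  push_cast
  rw [← Finset.prod_mul_distrib]

lemma bT_sum {S : k → Type*} [∀ j, Fintype (S j)]
    (u : ∀ j, S j → ℂ) (ϱ : ∀ j, S j → Matrix (d j) (d j) ℂ) :
    ∑ s : ∀ j, S j, (∏ j, u j (s j)) • bT (fun j => ϱ j (s j))
      = bT (fun j => ∑ t, u j t • ϱ j t) := by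
  ext x y
  simp only [Matrix.sum_apply, Matrix.smul_apply, bT, smul_eq_mul]
  rw [Fintype.prod_sum (fun j t => u j t * ϱ j t (x j) (y j))]
  exact Finset.sum_congr rfl fun s _ => by rw [Finset.prod_mul_distrib]

lemma bT_psd_sub {L U : ∀ j, Matrix (d j) (d j) ℂ} (hL : ∀ j, (L j).PosSemidef)
    (hUL : ∀ j, (U j - L j).PosSemidef) : (bT U - bT L).PosSemidef := by
  have hU : ∀ j, (U j).PosSemidef := fun j => by
    have := (hUL j).add (hL j)
    simpa using this
  suffices H : ∀ t : Finset k,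
      (bT (fun j => if j ∈ t then U j else L j) - bT L).PosSemidef by
    have := H Finset.univ
    simpa using this
  intro t
  induction t using Finset.induction with
  | empty => simpa using Matrix.PosSemidef.zero
  | @insert i t hi ih =>
    have key : bT (fun j => if j ∈ insert i t then U j else L j)
        - bT (fun j => if j ∈ t then U j else L j)
        = bT (fun j => if j = i then U j - L j else if j ∈ t then U j else L j) := by
      ext x y
      simp only [Matrix.sub_apply, bT]
      rw [← Finset.mul_prod_erase Finset.univ
            (fun j => (if j ∈ insert i t then U j else L j) (x j) (y j)) (Finset.mem_univ i),
          ← Finset.mul_prod_erase Finset.univ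
            (fun j => (if j ∈ t then U j else L j) (x j) (y j)) (Finset.mem_univ i),
          ← Finset.mul_prod_erase Finset.univ
            (fun j => (if j = i then U j - L j else if j ∈ t then U j else L j) (x j) (y j))
            (Finset.mem_univ i)]
      simp only [Finset.mem_insert_self, if_pos, if_neg hi, if_pos rfl]
      have h1 : ∏ j ∈ Finset.univ.erase i,
          (if j ∈ insert i t then U j else L j) (x j) (y j)
          = ∏ j ∈ Finset.univ.erase i, (if j ∈ t then U j else L j) (x j) (y j) :=
        Finset.prod_congr rfl fun j hj => by
          simp [Finset.mem_insert, (Finset.mem_erase.mp hj).1]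
      have h2 : ∏ j ∈ Finset.univ.erase i,
          (if j = i then U j - L j else if j ∈ t then U j else L j) (x j) (y j)
          = ∏ j ∈ Finset.univ.erase i, (if j ∈ t then U j else L j) (x j) (y j) :=
        Finset.prod_congr rfl fun j hj => by
          simp [(Finset.mem_erase.mp hj).1]
      rw [h1, h2, Matrix.sub_apply]
      ring
    have hmixed : (bT (fun j => if j = i then U j - L j
        else if j ∈ t then U j else L j)).PosSemidef := by
      refine bT_posSemidef fun j => ?_
      by_cases hji : j = i
      · subst hji
        simp only [if_pos rfl]
        exact hUL j
      · simp only [if_neg hji]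
        by_cases hjt : j ∈ t
        · simp only [if_pos hjt]; exact hU j
        · simp only [if_neg hjt]; exact hL j
    have := (key ▸ hmixed).add ih
    simpa [sub_add_sub_cancel] using this

lemma bT_le_smul {L R : ∀ j, Matrix (d j) (d j) ℂ} (c : k → ℝ) (hc : ∀ j, 0 ≤ c j)
    (hL : ∀ j, (L j).PosSemidef)
    (hU : ∀ j, ((c j : ℂ) • R j - L j).PosSemidef) :
    (((∏ j, c j : ℝ) : ℂ) • bT R - bT L).PosSemidef := by
  have := bT_psd_sub (U := fun j => (c j : ℂ) • R j) hL hU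
  rwa [bT_smul] at this

end BigTensor

/-! ### Game-theoretic lemmas -/

section Games

open Matrix
open scoped ComplexOrder

variable {m S A : Type*} [Fintype m] [DecidableEq m] [Fintype S] [Fintype A]

lemma val_le_one' {ϱ : S → Matrix m m ℂ} {σ : S → A → ℝ} {P : A → Matrix m m ℂ}
    (hσ1 : ∀ s a, σ s a ≤ 1) (hnn : ∀ s a, 0 ≤ (Matrix.trace (P a * ϱ s)).re)
    (hZ : 0 < normZ ϱ P) : val ϱ σ P ≤ 1 := by
  have h1 : val ϱ σ P ≤ ∑ s, ∑ a, induced ϱ P s a := by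
    refine Finset.sum_le_sum fun s _ => Finset.sum_le_sum fun a _ => ?_
    exact mul_le_of_le_one_right (div_nonneg (hnn s a) hZ.le) (hσ1 s a)
  have h2 : ∑ s, ∑ a, induced ϱ P s a = 1 := by
    simp only [QRG.induced, ← Finset.sum_div]
    exact div_self hZ.ne'
  linarith

lemma val_nonneg' {ϱ : S → Matrix m m ℂ} {σ : S → A → ℝ} {P : A → Matrix m m ℂ}
    (hσ0 : ∀ s a, 0 ≤ σ s a) (hnn : ∀ s a, 0 ≤ (Matrix.trace (P a * ϱ s)).re)
    (hZ : 0 < normZ ϱ P) : 0 ≤ val ϱ σ P := by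
  refine Finset.sum_nonneg fun s _ => Finset.sum_nonneg fun a _ => ?_
  exact mul_nonneg (div_nonneg (hnn s a) hZ.le) (hσ0 s a)

lemma selSet_le_one {ϱ : S → Matrix m m ℂ} {σ : S → A → ℝ}
    (hpsd : ∀ s, (ϱ s).PosSemidef) (hσ : ∀ s a, σ s a ∈ Set.Icc (0:ℝ) 1) :
    ∀ x ∈ {v | ∃ P : A → Matrix m m ℂ,
      (∀ a, (P a).PosSemidef) ∧ 0 < normZ ϱ P ∧ v = val ϱ σ P}, x ≤ 1 := by
  rintro x ⟨P, hP, hZ, rfl⟩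
  exact val_le_one' (fun s a => (hσ s a).2)
    (fun s a => cre_nonneg (trace_psd_mul_nonneg (hP a) (hpsd s))) hZ

lemma sel_le_one {ϱ : S → Matrix m m ℂ} {σ : S → A → ℝ}
    (hpsd : ∀ s, (ϱ s).PosSemidef) (hσ : ∀ s a, σ s a ∈ Set.Icc (0:ℝ) 1) :
    sel ϱ σ ≤ 1 :=
  Real.sSup_le (selSet_le_one hpsd hσ) zero_le_one

lemma sel_nonneg' [DecidableEq m] [Nonempty A] {ϱ : S → Matrix m m ℂ} {σ : S → A → ℝ}
    (hpsd : ∀ s, (ϱ s).PosSemidef) (htr : ∑ s, (ϱ s).trace = 1)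
    (hσ : ∀ s a, σ s a ∈ Set.Icc (0:ℝ) 1) :
    0 ≤ sel ϱ σ := by
  set P : A → Matrix m m ℂ := fun _ => 1 with hPdef
  have hnn : ∀ s (a : A), 0 ≤ (Matrix.trace (P a * ϱ s)).re := fun s a =>
    cre_nonneg (trace_psd_mul_nonneg Matrix.PosSemidef.one (hpsd s))
  have hZ : normZ ϱ P = Fintype.card A := by
    unfold QRG.normZ
    simp only [hPdef, Matrix.one_mul, Finset.sum_const, Finset.card_univ, nsmul_eq_mul]
    rw [← Finset.mul_sum, ← Complex.re_sum, htr]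
    simp
  have hZpos : 0 < normZ ϱ P := by
    rw [hZ]
    exact_mod_cast Fintype.card_pos
  have h0 : 0 ≤ val ϱ σ P := val_nonneg' (fun s a => (hσ s a).1) hnn hZpos
  refine h0.trans (le_csSup ⟨1, ?_⟩ ⟨P, fun _ => Matrix.PosSemidef.one, hZpos, rfl⟩)
  exact selSet_le_one hpsd hσ

/-- The key single-game bound:  `∑_s σ(s,a)·ϱ(s) ≤ Sel(G)·ρ`. -/
lemma ensemble_le_sel [Nonempty A] {ϱ : S → Matrix m m ℂ} {σ : S → A → ℝ}
    (hpsd : ∀ s, (ϱ s).PosSemidef) (hpd : (∑ s, ϱ s).PosDef)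
    (hσ : ∀ s a, σ s a ∈ Set.Icc (0:ℝ) 1) (a : A) :
    (((sel ϱ σ : ℝ) : ℂ) • (∑ s, ϱ s) - ∑ s, ((σ s a : ℝ) : ℂ) • ϱ s).PosSemidef := by
  classical
  set D : ℝ := sel ϱ σ with hD
  set M : Matrix m m ℂ := ∑ s, ((σ s a : ℝ) : ℂ) • ϱ s with hM
  set ρ : Matrix m m ℂ := ∑ s, ϱ s with hρ
  have hρpsd : ρ.PosSemidef := psd_sum _ _ fun s _ => hpsd s
  have hbdd : BddAbove {v | ∃ P : A → Matrix m m ℂ,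
      (∀ a, (P a).PosSemidef) ∧ 0 < normZ ϱ P ∧ v = val ϱ σ P} :=
    ⟨1, selSet_le_one hpsd hσ⟩
  -- the main quadratic form estimate
  have main : ∀ v : m → ℂ,
      (Matrix.trace (Matrix.vecMulVec v (star v) * M)).re
        ≤ D * (Matrix.trace (Matrix.vecMulVec v (star v) * ρ)).re := by
    intro v
    rcases eq_or_ne v 0 with rfl | hv
    · rw [trace_vecMulVec_mul, trace_vecMulVec_mul]
      simp
    set Q : Matrix m m ℂ := Matrix.vecMulVec v (star v) with hQdef
    have hQ : Q.PosSemidef := vecMulVec_posSemidef v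
    have hQρpos : 0 < (Matrix.trace (Q * ρ)).re := by
      rw [trace_vecMulVec_mul]
      have := hpd.re_dotProduct_pos hv
      simpa using this
    set P : A → Matrix m m ℂ := fun a' => if a' = a then Q else 0 with hPdef
    have hPpsd : ∀ a', (P a').PosSemidef := fun a' => by
      by_cases h : a' = a
      · simp only [hPdef, if_pos h]; exact hQ
      · simp only [hPdef, if_neg h]; exact Matrix.PosSemidef.zero
    have hcollapse : ∀ s, ∑ a', (Matrix.trace (P a' * ϱ s)).re
        = (Matrix.trace (Q * ϱ s)).re := by
      intro s
      rw [Finset.sum_eq_single a]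
      · simp [hPdef]
      · intro a' _ ha'
        simp [hPdef, if_neg ha']
      · intro h
        exact absurd (Finset.mem_univ a) h
    have hZ : normZ ϱ P = (Matrix.trace (Q * ρ)).re := by
      unfold QRG.normZ
      rw [Finset.sum_congr rfl fun s _ => hcollapse s, hρ, Matrix.mul_sum,
        Matrix.trace_sum, Complex.re_sum]
    have hZpos : 0 < normZ ϱ P := by rw [hZ]; exact hQρpos
    have hval : val ϱ σ P = (∑ s, (Matrix.trace (Q * ϱ s)).re * σ s a) / normZ ϱ P := by
      unfold QRG.val QRG.induced
      rw [Finset.sum_div]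
      refine Finset.sum_congr rfl fun s _ => ?_
      rw [Finset.sum_eq_single a]
      · rw [div_mul_eq_mul_div]
        congr 2
        simp [hPdef]
      · intro a' _ ha'
        simp [hPdef, if_neg ha']
      · intro h
        exact absurd (Finset.mem_univ a) h
    have hle : val ϱ σ P ≤ D :=
      le_csSup hbdd ⟨P, hPpsd, hZpos, rfl⟩
    have hnum : ∑ s, (Matrix.trace (Q * ϱ s)).re * σ s a ≤ D * normZ ϱ P := by
      rw [hval, div_le_iff₀ hZpos] at hle
      linarith
    have hQM : (Matrix.trace (Q * M)).re = ∑ s, (Matrix.trace (Q * ϱ s)).re * σ s a := by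
      rw [hM, Matrix.mul_sum, Matrix.trace_sum, Complex.re_sum]
      refine Finset.sum_congr rfl fun s _ => ?_
      rw [Matrix.mul_smul, Matrix.trace_smul, smul_eq_mul, ofReal_mul_re]
      ring
    rw [hQM]
    calc ∑ s, (Matrix.trace (Q * ϱ s)).re * σ s a ≤ D * normZ ϱ P := hnum
    _ = D * (Matrix.trace (Q * ρ)).re := by rw [hZ]
  -- Hermitian-ness
  have hMherm : Mᴴ = M := by
    rw [hM, Matrix.conjTranspose_sum]
    refine Finset.sum_congr rfl fun s _ => ?_
    rw [Matrix.conjTranspose_smul, (hpsd s).1.eq]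
    simp
  have hρherm : ρᴴ = ρ := hρpsd.1.eq
  have hXherm : (((D : ℝ) : ℂ) • ρ - M)ᴴ = ((D : ℝ) : ℂ) • ρ - M := by
    rw [Matrix.conjTranspose_sub, Matrix.conjTranspose_smul, hρherm, hMherm]
    simp
  refine Matrix.PosSemidef.of_dotProduct_mulVec_nonneg hXherm fun v => ?_
  have hform : star v ⬝ᵥ (((D : ℝ) : ℂ) • ρ - M) *ᵥ v
      = Matrix.trace (Matrix.vecMulVec v (star v) * (((D : ℝ) : ℂ) • ρ - M)) :=
    (trace_vecMulVec_mul v _).symm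
  rw [hform]
  set Q : Matrix m m ℂ := Matrix.vecMulVec v (star v) with hQdef
  have hQ : Q.PosSemidef := vecMulVec_posSemidef v
  set z : ℂ := Matrix.trace (Q * (((D : ℝ) : ℂ) • ρ - M)) with hz
  have hzre : 0 ≤ z.re := by
    rw [hz, Matrix.mul_sub, Matrix.trace_sub, Complex.sub_re, Matrix.mul_smul,
      Matrix.trace_smul, smul_eq_mul, ofReal_mul_re]
    have := main v
    linarith
  have hzim : z.im = 0 := by
    have hstar : star z = z := by
      rw [hz, ← Matrix.trace_conjTranspose, Matrix.conjTranspose_mul, hXherm, hQ.1.eq,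
        Matrix.trace_mul_comm]
    rw [← Complex.conj_eq_iff_im]
    exact hstar
  rw [Complex.nonneg_iff]
  exact ⟨hzre, hzim.symm⟩

end Games

/-! ### Scalar inequalities -/

section Scalar

lemma exp_le_affine {x L : ℝ} (h0 : 0 ≤ x) (h1 : x ≤ 1) (hL : 0 ≤ L) :
    Real.exp (x * L) ≤ 1 + (Real.exp L - 1) * x := by
  have h := convexOn_exp.2 (Set.mem_univ (0 : ℝ)) (Set.mem_univ L)
    (by linarith : (0:ℝ) ≤ 1 - x) h0 (by ring)
  simp only [smul_eq_mul, mul_zero, zero_add, Real.exp_zero, mul_one] at h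
  calc Real.exp (x * L) ≤ (1 - x) + x * Real.exp L := h
  _ = 1 + (Real.exp L - 1) * x := by ring

lemma prod_le_avg_pow {n : ℕ} (hn : 0 < n) (x : Fin n → ℝ) (hx : ∀ j, 0 ≤ x j) :
    ∏ j, x j ≤ ((∑ j, x j) / n) ^ n := by
  have hn' : (n : ℝ) ≠ 0 := Nat.cast_ne_zero.mpr hn.ne'
  have hw : ∑ _j : Fin n, (1 / n : ℝ) = 1 := by
    rw [Finset.sum_const, Finset.card_univ, Fintype.card_fin, nsmul_eq_mul]
    field_simp
  have h := Real.geom_mean_le_arith_mean_weighted Finset.univ (fun _ => 1 / (n : ℝ)) x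
    (fun _ _ => by positivity) hw (fun i _ => hx i)
  have hsum : ∑ j, (1 / (n : ℝ)) * x j = (∑ j, x j) / n := by
    rw [← Finset.mul_sum]
    ring
  have hL : (∏ j, x j) = (∏ j, x j ^ (1 / (n : ℝ))) ^ n := by
    rw [← Finset.prod_pow]
    refine Finset.prod_congr rfl fun j _ => ?_
    rw [← Real.rpow_natCast (x j ^ (1 / (n : ℝ))) n, ← Real.rpow_mul (hx j), one_div,
      inv_mul_cancel₀ hn', Real.rpow_one]
  rw [hL]
  exact pow_le_pow_left₀ (Finset.prod_nonneg fun j _ => Real.rpow_nonneg (hx j) _)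
    (h.trans_eq hsum) n

end Scalar

/-- Selective value of a threshold game: if `n` weighted quantum retrieval games with
`[0,1]`-valued utilities have selective values `δ_j`, then the threshold game on their
tensor product, accepting iff `∑_j σ_j(s_j,a_j) ≥ γ·n`, has selective value at most
`2·exp(−n·D(γ‖δ))` with `δ = (1/n)∑_j δ_j`. -/
theorem sel_threshold_game (n : ℕ) (hn : 0 < n)
    (d : Fin n → Type) [∀ j, Fintype (d j)] [∀ j, DecidableEq (d j)]
    (S A : Fin n → Type) [∀ j, Fintype (S j)] [∀ j, Fintype (A j)]
    [∀ j, Nonempty (S j)] [∀ j, Nonempty (A j)]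
    (ϱ : ∀ j, S j → Matrix (d j) (d j) ℂ) (σ : ∀ j, S j → A j → ℝ)
    (hσ : ∀ j s a, σ j s a ∈ Set.Icc (0 : ℝ) 1)
    (hpsd : ∀ j s, (ϱ j s).PosSemidef) (htr : ∀ j, ∑ s, (ϱ j s).trace = 1)
    (hpd : ∀ j, (∑ s, ϱ j s).PosDef)
    (δ : Fin n → ℝ) (hδ : ∀ j, sel (ϱ j) (σ j) = δ j)
    (γ : ℝ) (hγ₁ : (∑ j, δ j) / n ≤ γ) (hγ₂ : γ ≤ 1) (hγn : ∃ m : ℕ, γ * n = (m : ℝ)) :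
    sel (fun s : ∀ j, S j =>
        (fun x y => ∏ j, ϱ j (s j) (x j) (y j) : Matrix (∀ j, d j) (∀ j, d j) ℂ))
      (fun s (a : ∀ j, A j) => if γ * n ≤ ∑ j, σ j (s j) (a j) then (1 : ℝ) else 0) ≤
      2 * Real.exp (-(n : ℝ) * binRelEnt γ ((∑ j, δ j) / n)) := by
  classical
  set δm : ℝ := (∑ j, δ j) / n with hδm
  have hn' : (n : ℝ) ≠ 0 := Nat.cast_ne_zero.mpr hn.ne'
  have hnpos : (0:ℝ) < n := Nat.cast_pos.mpr hn
  have hδ0 : ∀ j, 0 ≤ δ j := fun j => (hδ j) ▸ sel_nonneg' (hpsd j) (htr j) (hσ j)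
  have hδ1 : ∀ j, δ j ≤ 1 := fun j => (hδ j) ▸ sel_le_one (hpsd j) (hσ j)
  have hδm0 : 0 ≤ δm := by
    rw [hδm]
    exact div_nonneg (Finset.sum_nonneg fun j _ => hδ0 j) hnpos.le
  set K : ℝ := Real.exp (-(n : ℝ) * binRelEnt γ δm) with hK
  have hKpos : 0 < K := Real.exp_pos _
  set ϱb : (∀ j, S j) → Matrix (∀ j, d j) (∀ j, d j) ℂ :=
    fun s => (fun x y => ∏ j, ϱ j (s j) (x j) (y j)) with hϱbdef
  set σγ : (∀ j, S j) → (∀ j, A j) → ℝ :=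
    fun s a => if γ * n ≤ ∑ j, σ j (s j) (a j) then (1:ℝ) else 0 with hσγdef
  refine Real.sSup_le ?_ (by linarith)
  rintro x ⟨P, hP, hZ, rfl⟩
  have hϱb_psd : ∀ s, (ϱb s).PosSemidef := fun s => bT_posSemidef fun j => hpsd j (s j)
  have htrnn : ∀ s (a : ∀ j, A j), 0 ≤ (Matrix.trace (P a * ϱb s)).re :=
    fun s a => cre_nonneg (trace_psd_mul_nonneg (hP a) (hϱb_psd s))
  have hM : ∀ j (a : A j),
      (((δ j : ℝ) : ℂ) • (∑ t, ϱ j t) - ∑ t, ((σ j t a : ℝ) : ℂ) • ϱ j t).PosSemidef :=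
    fun j a => hδ j ▸ ensemble_le_sel (hpsd j) (hpd j) (hσ j) a
  have hRb : ∑ s, ϱb s = bT (fun j => ∑ t, ϱ j t) := by
    have h := bT_sum (fun j (_ : S j) => (1:ℂ)) ϱ
    simp at h; exact h
  -- the core estimate
  have core : ∀ (β : ℝ) (c : Fin n → ℝ) (w : ∀ j, S j → A j → ℝ),
      0 ≤ β → (∀ j, 0 ≤ c j) → (∀ j t a, 0 ≤ w j t a) →
      (∀ j (a : A j), (((c j : ℝ) : ℂ) • (∑ t, ϱ j t)
          - ∑ t, ((w j t a : ℝ) : ℂ) • ϱ j t).PosSemidef) →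
      (∀ s (a : ∀ j, A j), σγ s a ≤ β * ∏ j, w j (s j) (a j)) →
      val ϱb σγ P ≤ β * ∏ j, c j := by
    intro β c w hβ hc hw hcw hdom
    have hval : val ϱb σγ P
        = (∑ a, ∑ s, (Matrix.trace (P a * ϱb s)).re * σγ s a) / normZ ϱb P := by
      unfold QRG.val QRG.induced
      rw [Finset.sum_comm]
      simp only [div_mul_eq_mul_div, Finset.sum_div]
    have hZeq : normZ ϱb P = ∑ a, (Matrix.trace (P a * bT (fun j => ∑ t, ϱ j t))).re := by
      unfold QRG.normZ
      rw [Finset.sum_comm]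
      refine Finset.sum_congr rfl fun a _ => ?_
      rw [← hRb, Matrix.mul_sum, Matrix.trace_sum, Complex.re_sum]
    have per_a : ∀ a : ∀ j, A j,
        ∑ s, (Matrix.trace (P a * ϱb s)).re * σγ s a
          ≤ β * (∏ j, c j) * (Matrix.trace (P a * bT (fun j => ∑ t, ϱ j t))).re := by
      intro a
      have hLpsd : ∀ j, (∑ t, ((w j t (a j) : ℝ) : ℂ) • ϱ j t).PosSemidef :=
        fun j => psd_sum _ _ fun t _ => psd_smul (hpsd j t) (hw j t (a j))
      have h1 : ∑ s, (Matrix.trace (P a * ϱb s)).re * σγ s a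
          ≤ β * ∑ s, (∏ j, w j (s j) (a j)) * (Matrix.trace (P a * ϱb s)).re := by
        rw [Finset.mul_sum]
        refine Finset.sum_le_sum fun s _ => ?_
        calc (Matrix.trace (P a * ϱb s)).re * σγ s a
            ≤ (Matrix.trace (P a * ϱb s)).re * (β * ∏ j, w j (s j) (a j)) :=
              mul_le_mul_of_nonneg_left (hdom s a) (htrnn s a)
          _ = β * ((∏ j, w j (s j) (a j)) * (Matrix.trace (P a * ϱb s)).re) := by ring
      have h2 : ∑ s, (∏ j, w j (s j) (a j)) * (Matrix.trace (P a * ϱb s)).re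
          = (Matrix.trace (P a * bT (fun j => ∑ t, ((w j t (a j) : ℝ) : ℂ) • ϱ j t))).re := by
        rw [← bT_sum (fun j t => ((w j t (a j) : ℝ) : ℂ)) ϱ, Matrix.mul_sum,
          Matrix.trace_sum, Complex.re_sum]
        refine Finset.sum_congr rfl fun s _ => ?_
        rw [Matrix.mul_smul, Matrix.trace_smul, smul_eq_mul]
        rw [show (∏ j, ((w j (s j) (a j) : ℝ) : ℂ)) = ((∏ j, w j (s j) (a j) : ℝ) : ℂ) by
          push_cast; rfl]
        rw [ofReal_mul_re]
        rfl
      have h3 : (Matrix.trace (P a * bT (fun j => ∑ t, ((w j t (a j) : ℝ) : ℂ) • ϱ j t))).re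
          ≤ (∏ j, c j) * (Matrix.trace (P a * bT (fun j => ∑ t, ϱ j t))).re := by
        have hdiff := bT_le_smul c hc hLpsd (fun j => hcw j (a j))
        have hmono := trace_re_mono (hP a) hdiff
        rwa [Matrix.mul_smul, Matrix.trace_smul, smul_eq_mul, ofReal_mul_re] at hmono
      calc ∑ s, (Matrix.trace (P a * ϱb s)).re * σγ s a
          ≤ β * ∑ s, (∏ j, w j (s j) (a j)) * (Matrix.trace (P a * ϱb s)).re := h1
        _ = β * (Matrix.trace (P a * bT (fun j => ∑ t, ((w j t (a j) : ℝ) : ℂ) • ϱ j t))).re := by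
            rw [h2]
        _ ≤ β * ((∏ j, c j) * (Matrix.trace (P a * bT (fun j => ∑ t, ϱ j t))).re) :=
            mul_le_mul_of_nonneg_left h3 hβ
        _ = β * (∏ j, c j) * (Matrix.trace (P a * bT (fun j => ∑ t, ϱ j t))).re := by ring
    rw [hval, div_le_iff₀ hZ, hZeq, Finset.mul_sum]
    exact Finset.sum_le_sum fun a _ => per_a a
  -- case analysis
  rcases eq_or_lt_of_le hδm0 with hδm_eq | hδm_pos
  · -- δm = 0 : trivial bound val ≤ 1 ≤ K
    have hγ0 : 0 ≤ γ := by rw [← hδm_eq] at hγ₁; exact hγ₁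
    have hval1 : val ϱb σγ P ≤ 1 := by
      refine val_le_one' (fun s a => ?_) htrnn hZ
      simp only [hσγdef]
      split <;> norm_num
    have hK1 : 1 ≤ K := by
      rw [hK]
      apply Real.one_le_exp
      have hbre : binRelEnt γ δm = (1 - γ) * Real.log (1 - γ) := by
        rw [← hδm_eq]
        simp [binRelEnt, div_zero, Real.log_zero]
      rw [hbre]
      have hlog : Real.log (1 - γ) ≤ 0 := Real.log_nonpos (by linarith) (by linarith)
      have hX : (1 - γ) * Real.log (1 - γ) ≤ 0 :=
        mul_nonpos_iff.mpr (Or.inl ⟨by linarith, hlog⟩)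
      nlinarith [hnpos]
    linarith
  · rcases eq_or_lt_of_le hγ₂ with hγ1 | hγlt
    · -- γ = 1
      have hdom : ∀ s (a : ∀ j, A j), σγ s a ≤ 1 * ∏ j, σ j (s j) (a j) := by
        intro s a
        rw [one_mul]
        simp only [hσγdef]
        by_cases h : γ * n ≤ ∑ j, σ j (s j) (a j)
        · rw [if_pos h]
          have hall : ∀ j, σ j (s j) (a j) = 1 := by
            intro j
            have hle := (hσ j (s j) (a j)).2
            have hsum : ∑ k ∈ Finset.univ.erase j, σ k (s k) (a k) ≤ (n : ℝ) - 1 := by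
              have hcard : (Finset.univ.erase j).card = n - 1 := by
                rw [Finset.card_erase_of_mem (Finset.mem_univ j), Finset.card_univ,
                  Fintype.card_fin]
              have hb := Finset.sum_le_card_nsmul (Finset.univ.erase j)
                (fun k => σ k (s k) (a k)) 1 (fun k _ => (hσ k (s k) (a k)).2)
              rw [hcard, nsmul_eq_mul, mul_one, Nat.cast_sub (by omega : 1 ≤ n)] at hb
              simpa using hb
            have hsplit : σ j (s j) (a j) + ∑ k ∈ Finset.univ.erase j, σ k (s k) (a k)
                = ∑ k, σ k (s k) (a k) :=
              Finset.add_sum_erase Finset.univ (fun k => σ k (s k) (a k)) (Finset.mem_univ j)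
            have hγn' : γ * n = (n : ℝ) := by rw [hγ1, one_mul]
            rw [hγn'] at h
            linarith
          rw [Finset.prod_congr rfl (fun j _ => hall j), Finset.prod_const_one]
        · rw [if_neg h]
          exact Finset.prod_nonneg fun j _ => (hσ j (s j) (a j)).1
      have hcore := core 1 δ (fun j t a => σ j t a) zero_le_one hδ0
        (fun j t a => (hσ j t a).1) (fun j a => hM j a) hdom
      have hAM : ∏ j, δ j ≤ δm ^ n := by
        have h := prod_le_avg_pow hn δ hδ0
        rwa [← hδm] at h
      have hKeq : K = δm ^ n := by
        rw [hK]
        have hbre : binRelEnt γ δm = - Real.log δm := by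
          rw [hγ1]
          simp [binRelEnt]
        rw [hbre, show -(n:ℝ) * - Real.log δm = (n : ℕ) * Real.log δm by push_cast; ring,
          Real.exp_nat_mul, Real.exp_log hδm_pos]
      calc val ϱb σγ P ≤ 1 * ∏ j, δ j := hcore
        _ = ∏ j, δ j := one_mul _
        _ ≤ δm ^ n := hAM
        _ = K := hKeq.symm
        _ ≤ 2 * K := by linarith
    · -- 0 < δm ≤ γ < 1
      have hγpos : 0 < γ := lt_of_lt_of_le hδm_pos hγ₁
      have h1γ : 0 < 1 - γ := by linarith
      have h1δm : 0 < 1 - δm := by linarith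
      set q : ℝ := γ * (1 - δm) / (δm * (1 - γ)) with hq
      have hqpos : 0 < q := div_pos (mul_pos hγpos h1δm) (mul_pos hδm_pos h1γ)
      have hq1 : 1 ≤ q := by
        rw [hq, le_div_iff₀ (mul_pos hδm_pos h1γ)]
        nlinarith [hγ₁]
      set L : ℝ := Real.log q with hLdef
      have hL0 : 0 ≤ L := Real.log_nonneg hq1
      have heL : Real.exp L = q := Real.exp_log hqpos
      set E : ℝ := Real.exp L - 1 with hE
      have hE0 : 0 ≤ E := by
        have h := Real.one_le_exp hL0
        rw [hE]
        linarith
      have hwnn : ∀ j t (a : A j), 0 ≤ 1 + E * σ j t a := fun j t a => by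
        nlinarith [(hσ j t a).1, hE0]
      have hcnn : ∀ j, 0 ≤ 1 + E * δ j := fun j => by nlinarith [hδ0 j, hE0]
      have hmat : ∀ j (a : A j), (((1 + E * δ j : ℝ) : ℂ) • (∑ t, ϱ j t)
          - ∑ t, ((1 + E * σ j t a : ℝ) : ℂ) • ϱ j t).PosSemidef := by
        intro j a
        have h1 : ∑ t, ((1 + E * σ j t a : ℝ) : ℂ) • ϱ j t
            = (∑ t, ϱ j t) + (E : ℂ) • ∑ t, ((σ j t a : ℝ) : ℂ) • ϱ j t := by
          rw [Finset.smul_sum, ← Finset.sum_add_distrib]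
          refine Finset.sum_congr rfl fun t _ => ?_
          rw [smul_smul,
            show ((1 + E * σ j t a : ℝ) : ℂ) = 1 + (E:ℂ) * ((σ j t a : ℝ):ℂ) by push_cast; ring,
            add_smul, one_smul]
        have h2 : ((1 + E * δ j : ℝ) : ℂ) • (∑ t, ϱ j t)
            = (∑ t, ϱ j t) + (E : ℂ) • (((δ j : ℝ) : ℂ) • ∑ t, ϱ j t) := by
          rw [smul_smul,
            show ((1 + E * δ j : ℝ) : ℂ) = 1 + (E:ℂ) * ((δ j : ℝ):ℂ) by push_cast; ring,
            add_smul, one_smul]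
        rw [h1, h2, add_sub_add_left_eq_sub, ← smul_sub]
        exact psd_smul (hM j a) hE0
      have hdom : ∀ s (a : ∀ j, A j),
          σγ s a ≤ Real.exp (-(γ * n * L)) * ∏ j, (1 + E * σ j (s j) (a j)) := by
        intro s a
        simp only [hσγdef]
        by_cases h : γ * n ≤ ∑ j, σ j (s j) (a j)
        · rw [if_pos h]
          have hp : ∀ j, Real.exp (σ j (s j) (a j) * L) ≤ 1 + E * σ j (s j) (a j) := by
            intro j
            have hexp := exp_le_affine (hσ j (s j) (a j)).1 (hσ j (s j) (a j)).2 hL0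
            rw [← hE] at hexp
            exact hexp
          have hprod : Real.exp ((∑ j, σ j (s j) (a j)) * L)
              ≤ ∏ j, (1 + E * σ j (s j) (a j)) := by
            rw [Finset.sum_mul, Real.exp_sum]
            exact Finset.prod_le_prod (fun j _ => (Real.exp_pos _).le) (fun j _ => hp j)
          have hstep : Real.exp (γ * n * L) ≤ Real.exp ((∑ j, σ j (s j) (a j)) * L) :=
            Real.exp_le_exp.mpr (mul_le_mul_of_nonneg_right h hL0)
          calc (1:ℝ) = Real.exp (-(γ * n * L)) * Real.exp (γ * n * L) := by
                rw [← Real.exp_add]; simp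
            _ ≤ Real.exp (-(γ * n * L)) * Real.exp ((∑ j, σ j (s j) (a j)) * L) :=
                mul_le_mul_of_nonneg_left hstep (Real.exp_nonneg _)
            _ ≤ Real.exp (-(γ * n * L)) * ∏ j, (1 + E * σ j (s j) (a j)) :=
                mul_le_mul_of_nonneg_left hprod (Real.exp_nonneg _)
        · rw [if_neg h]
          exact mul_nonneg (Real.exp_nonneg _)
            (Finset.prod_nonneg fun j _ => hwnn j (s j) (a j))
      have hcore := core (Real.exp (-(γ * n * L))) (fun j => 1 + E * δ j)
        (fun j t a => 1 + E * σ j t a) (Real.exp_nonneg _) hcnn hwnn hmat hdom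
      have hAM : ∏ j, (1 + E * δ j) ≤ (1 + E * δm) ^ n := by
        have h := prod_le_avg_pow hn (fun j => 1 + E * δ j) hcnn
        have havg : (∑ j, (1 + E * δ j)) / (n : ℝ) = 1 + E * δm := by
          rw [Finset.sum_add_distrib, Finset.sum_const, Finset.card_univ, Fintype.card_fin,
            nsmul_eq_mul, mul_one, ← Finset.mul_sum, hδm]
          field_simp
        rwa [havg] at h
      have h1Eδm : 1 + E * δm = (1 - δm) / (1 - γ) := by
        rw [hE, heL, hq]
        field_simp
        ring
      have hfinal : Real.exp (-(γ * n * L)) * (1 + E * δm) ^ n = K := by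
        rw [h1Eδm, hK,
          show ((1 - δm) / (1 - γ)) ^ n = Real.exp ((n : ℝ) * Real.log ((1 - δm) / (1 - γ))) by
            rw [Real.exp_nat_mul, Real.exp_log (div_pos h1δm h1γ)],
          ← Real.exp_add]
        congr 1
        rw [hLdef, hq, Real.log_div (mul_pos hγpos h1δm).ne' (mul_pos hδm_pos h1γ).ne',
          Real.log_mul hγpos.ne' h1δm.ne', Real.log_mul hδm_pos.ne' h1γ.ne',
          Real.log_div h1δm.ne' h1γ.ne']
        simp only [binRelEnt]
        rw [Real.log_div hγpos.ne' hδm_pos.ne', Real.log_div h1γ.ne' h1δm.ne']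
        ring
      calc val ϱb σγ P ≤ Real.exp (-(γ * n * L)) * ∏ j, (1 + E * δ j) := hcore
        _ ≤ Real.exp (-(γ * n * L)) * (1 + E * δm) ^ n :=
            mul_le_mul_of_nonneg_left hAM (Real.exp_nonneg _)
        _ = K := hfinal
        _ ≤ 2 * K := by linarith
end

section
/- (Value of the conjunction qubit-pair game) Consider the quantum retrieval game G_∧ = (ϱ, σ_∧) on ℂ⁴ with the eight-state qubit-pair ensemble, answer set A = {0,1}²×{0,1}², and utility σ_∧(s, (a_X, a_Z)) = σ_X(s, a_X)·σ_Z(s, a_Z). Then Sel(G_∧) = 3/4. -/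
open Matrix
open scoped ComplexOrder
open scoped ComplexOrder

open QRG

/-- The `Z`-eigenstates `|0⟩` (for `false`) and `|1⟩` (for `true`) of a qubit. -/
noncomputable def zket (b : Bool) : Fin 2 → ℂ :=
  fun i => if i = (if b then 1 else 0) then 1 else 0

/-- The `X`-eigenstates `|+⟩` (for `false`) and `|−⟩` (for `true`) of a qubit. -/
noncomputable def xket (b : Bool) : Fin 2 → ℂ :=
  fun i => (if b = true ∧ i = 1 then (-1 : ℂ) else 1) * ((Real.sqrt 2 : ℂ))⁻¹

/-- The eight qubit-pair states: `s = (w, zb, xb)` encodes the state `|z,x⟩` (when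
`w = false`) or `|x,z⟩` (when `w = true`), where `z` is the `Z`-eigenstate labelled by
`zb` and `x` is the `X`-eigenstate labelled by `xb`. -/
noncomputable def pairKet (s : Bool × Bool × Bool) : Fin 2 × Fin 2 → ℂ :=
  fun p => if s.1 then xket s.2.2 p.1 * zket s.2.1 p.2
           else zket s.2.1 p.1 * xket s.2.2 p.2

/-- The eight-state qubit-pair indexed ensemble `ϱ(s) = (1/8)|s⟩⟨s|` on `ℂ⁴`. -/
noncomputable def pairEns (s : Bool × Bool × Bool) :
    Matrix (Fin 2 × Fin 2) (Fin 2 × Fin 2) ℂ :=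
  ((1 : ℂ)/8) • Matrix.vecMulVec (pairKet s) (star (pairKet s))

/-- The `Z`-axis utility: the answer bit at the position where the state carries a
`Z`-eigenstate must agree with that eigenstate. -/
noncomputable def sigmaZ (s : Bool × Bool × Bool) (a : Bool × Bool) : ℝ :=
  if (if s.1 then a.2 else a.1) = s.2.1 then 1 else 0

/-- The `X`-axis utility: the answer bit at the position where the state carries an
`X`-eigenstate must agree with that eigenstate. -/
noncomputable def sigmaX (s : Bool × Bool × Bool) (a : Bool × Bool) : ℝ :=
  if (if s.1 then a.1 else a.2) = s.2.2 then 1 else 0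

lemma psd_trace_nonneg {n : Type*} [Fintype n] [DecidableEq n] {M : Matrix n n ℂ}
    (hM : M.PosSemidef) : 0 ≤ M.trace := by
  rw [Matrix.trace]
  refine Finset.sum_nonneg fun i _ => ?_
  have := hM.dotProduct_mulVec_nonneg (Pi.single i 1)
  simpa [Matrix.mulVec_single, dotProduct, Pi.single_apply] using this

lemma trace_mul_psd_nonneg {n : Type*} [Fintype n] [DecidableEq n] {P Q : Matrix n n ℂ}
    (hP : P.PosSemidef) (hQ : Q.PosSemidef) : 0 ≤ (P * Q).trace := by
  obtain ⟨B, rfl⟩ : ∃ B : Matrix n n ℂ, P = Bᴴ * B := by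
    open scoped MatrixOrder in
    obtain ⟨X, hX, -, hXA⟩ := CFC.exists_sqrt_of_isSelfAdjoint_of_quasispectrumRestricts
      hP.isHermitian (QuasispectrumRestricts.nnreal_of_nonneg (Matrix.nonneg_iff_posSemidef.mpr hP))
    exact ⟨X, by rw [← hXA]; congr 1; exact hX.star_eq.symm⟩
  rw [Matrix.mul_assoc, Matrix.trace_mul_comm]
  exact psd_trace_nonneg (hQ.mul_mul_conjTranspose_same B)

def xsgn (b : Bool) : Fin 2 → ℂ := fun i => if b = true ∧ i = 1 then -1 else 1

noncomputable def intKet (s : Bool × Bool × Bool) : Fin 2 × Fin 2 → ℂ :=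
  fun p => if s.1 then xsgn s.2.2 p.1 * zket s.2.1 p.2
           else zket s.2.1 p.1 * xsgn s.2.2 p.2

lemma sqrt2_ne : ((Real.sqrt 2 : ℝ) : ℂ) ≠ 0 := by
  norm_num [Complex.ofReal_eq_zero, Real.sqrt_eq_zero']

lemma sqrt2_sq : ((Real.sqrt 2 : ℝ) : ℂ) * ((Real.sqrt 2 : ℝ) : ℂ) = 2 := by
  rw [← Complex.ofReal_mul, Real.mul_self_sqrt (by norm_num)]
  norm_num

lemma pairKet_eq (s : Bool × Bool × Bool) :
    pairKet s = ((Real.sqrt 2 : ℂ))⁻¹ • intKet s := by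
  funext p
  simp only [pairKet, intKet, xket, Pi.smul_apply, smul_eq_mul]
  cases s.1 <;> simp only [xsgn, if_neg, if_pos] <;> split_ifs <;> simp <;> ring

lemma pairEns_eq (s : Bool × Bool × Bool) :
    pairEns s = ((1 : ℂ)/16) • Matrix.vecMulVec (intKet s) (star (intKet s)) := by
  rw [pairEns, pairKet_eq]
  ext p q
  simp only [Matrix.smul_apply, Matrix.vecMulVec_apply, Pi.smul_apply, Pi.star_apply,
    smul_eq_mul, star_mul', RCLike.star_def]
  have h1 : (starRingEnd ℂ) (((Real.sqrt 2 : ℝ) : ℂ))⁻¹ = (((Real.sqrt 2 : ℝ) : ℂ))⁻¹ := by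
    rw [map_inv₀, Complex.conj_ofReal]
  rw [h1]
  field_simp
  ring_nf
  rw [show (((Real.sqrt 2:ℝ):ℂ))^2 = 2 from by rw [sq, sqrt2_sq]]
  ring_nf

lemma c16 : (0:ℂ) ≤ (1/16 : ℂ) := by norm_num [Complex.le_def]
lemma sos (e f : ℂ) (he : e = 1 ∨ e = -1) (hf : f = 1 ∨ f = -1) (a b c d : ℂ) :
    0 ≤ (1/16:ℂ) * (3*((starRingEnd ℂ) a*a + (starRingEnd ℂ) b*b + (starRingEnd ℂ) c*c
        + (starRingEnd ℂ) d*d)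
      - ((starRingEnd ℂ) a + e * (starRingEnd ℂ) b)*(a + e*b)
      - ((starRingEnd ℂ) a + f * (starRingEnd ℂ) c)*(a + f*c)) := by
  have key : (1/16:ℂ) * (3*((starRingEnd ℂ) a*a + (starRingEnd ℂ) b*b + (starRingEnd ℂ) c*c
        + (starRingEnd ℂ) d*d)
      - ((starRingEnd ℂ) a + e * (starRingEnd ℂ) b)*(a + e*b)
      - ((starRingEnd ℂ) a + f * (starRingEnd ℂ) c)*(a + f*c))
      = (1/16:ℂ) * (star (a - e*b - f*c) * (a - e*b - f*c)
        + star (e*b - f*c) * (e*b - f*c) + 3 * (star d * d)) := by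
    simp only [star_sub, star_mul', RCLike.star_def]
    rcases he with rfl | rfl <;> rcases hf with rfl | rfl <;>
      simp only [_root_.map_one, _root_.map_neg] <;> ring
  rw [key]
  have h1 := star_mul_self_nonneg (a - e*b - f*c)
  have h2 := star_mul_self_nonneg (e*b - f*c)
  have h3 := star_mul_self_nonneg d
  have h4 : (0:ℂ) ≤ 3 := by norm_num [Complex.le_def]
  exact mul_nonneg (by norm_num [Complex.le_def])
    (add_nonneg (add_nonneg h1 h2) (mul_nonneg h4 h3))


lemma intKet_real (s : Bool × Bool × Bool) (p : Fin 2 × Fin 2) :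
    star (intKet s p) = intKet s p := by
  simp only [intKet, zket, xsgn]
  split_ifs <;> simp

lemma pairEns_herm (s : Bool × Bool × Bool) : (pairEns s).IsHermitian := by
  rw [Matrix.IsHermitian, pairEns_eq]
  ext p q
  simp only [Matrix.conjTranspose_apply, Matrix.smul_apply, Matrix.vecMulVec_apply,
    Pi.star_apply, smul_eq_mul, star_mul', intKet_real, star_star]
  rw [show star ((1:ℂ)/16) = 1/16 by norm_num]
  ring

lemma intKet_real' (s : Bool × Bool × Bool) : star (intKet s) = intKet s := by
  funext p; exact intKet_real s p

lemma dotProduct_sum' {ι : Type*} [Fintype ι] (v : (Fin 2 × Fin 2) → ℂ)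
    (f : ι → (Fin 2 × Fin 2) → ℂ) : v ⬝ᵥ (∑ i, f i) = ∑ i, v ⬝ᵥ f i := by
  simp only [dotProduct, Finset.sum_apply, Finset.mul_sum]
  rw [Finset.sum_comm]

set_option maxHeartbeats 4000000 in
lemma Dpsd (a : (Bool × Bool) × (Bool × Bool)) :
    PosSemidef (∑ s : Bool × Bool × Bool,
      ((((3:ℝ)/4 - sigmaX s a.1 * sigmaZ s a.2 : ℝ)) : ℂ) • pairEns s) := by
  refine Matrix.PosSemidef.of_dotProduct_mulVec_nonneg ?_ ?_
  · rw [Matrix.IsHermitian, Matrix.conjTranspose_sum]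
    refine Finset.sum_congr rfl fun s _ => ?_
    rw [Matrix.conjTranspose_smul, (pairEns_herm s).eq]
    congr 1
    exact Complex.conj_ofReal _
  · intro x
    have hsum : ∀ (f : Bool × Bool × Bool → Matrix (Fin 2 × Fin 2) (Fin 2 × Fin 2) ℂ),
        (∑ s, f s) *ᵥ x = ∑ s, (f s *ᵥ x) := by
      intro f; funext i
      simp only [Matrix.mulVec, dotProduct, Matrix.sum_apply, Finset.sum_apply,
        Finset.sum_mul]
      rw [Finset.sum_comm]
    have hq : ∀ s : Bool × Bool × Bool, (pairEns s *ᵥ x)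
        = ((1:ℂ)/16) • ((intKet s ⬝ᵥ x) • intKet s) := by
      intro s
      rw [pairEns_eq, Matrix.smul_mulVec]
      congr 1
      funext i
      simp only [Matrix.mulVec, dotProduct, Matrix.vecMulVec_apply, Pi.smul_apply,
        Pi.star_apply, smul_eq_mul, Finset.mul_sum, Finset.sum_mul]
      refine Finset.sum_congr rfl fun j _ => ?_
      rw [intKet_real]
      ring
    rw [hsum, dotProduct_sum']
    have hterm : ∀ s : Bool × Bool × Bool,
        star x ⬝ᵥ ((((((3:ℝ)/4 - sigmaX s a.1 * sigmaZ s a.2 : ℝ)) : ℂ) • pairEns s) *ᵥ x)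
        = ((((3:ℝ)/4 - sigmaX s a.1 * sigmaZ s a.2 : ℝ)) : ℂ) * ((1:ℂ)/16)
            * (star (intKet s ⬝ᵥ x) * (intKet s ⬝ᵥ x)) := by
      intro s
      rw [Matrix.smul_mulVec, hq]
      simp only [dotProduct_smul, smul_eq_mul, Matrix.star_dotProduct, intKet_real',
        star_star]
      ring
    simp only [hterm]
    obtain ⟨⟨ax1, ax2⟩, az1, az2⟩ := a
    cases ax1 <;> cases ax2 <;> cases az1 <;> cases az2 <;>
      simp only [Fintype.sum_prod_type, Fintype.sum_bool, sigmaX, sigmaZ, intKet, zket, xsgn,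
        dotProduct, Fin.sum_univ_two, Fin.isValue] <;>
      norm_num <;>
      first
      | (refine (sos 1 1 (Or.inl rfl) (Or.inl rfl) (x (0,0)) (x (0,1)) (x (1,0)) (x (1,1))).trans_eq ?_; ring1)
      | (refine (sos 1 (-1) (Or.inl rfl) (Or.inr rfl) (x (0,0)) (x (0,1)) (x (1,0)) (x (1,1))).trans_eq ?_; ring1)
      | (refine (sos (-1) 1 (Or.inr rfl) (Or.inl rfl) (x (0,0)) (x (0,1)) (x (1,0)) (x (1,1))).trans_eq ?_; ring1)
      | (refine (sos (-1) (-1) (Or.inr rfl) (Or.inr rfl) (x (0,0)) (x (0,1)) (x (1,0)) (x (1,1))).trans_eq ?_; ring1)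
      | (refine (sos 1 1 (Or.inl rfl) (Or.inl rfl) (x (0,1)) (x (0,0)) (x (1,1)) (x (1,0))).trans_eq ?_; ring1)
      | (refine (sos 1 (-1) (Or.inl rfl) (Or.inr rfl) (x (0,1)) (x (0,0)) (x (1,1)) (x (1,0))).trans_eq ?_; ring1)
      | (refine (sos (-1) 1 (Or.inr rfl) (Or.inl rfl) (x (0,1)) (x (0,0)) (x (1,1)) (x (1,0))).trans_eq ?_; ring1)
      | (refine (sos (-1) (-1) (Or.inr rfl) (Or.inr rfl) (x (0,1)) (x (0,0)) (x (1,1)) (x (1,0))).trans_eq ?_; ring1)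
      | (refine (sos 1 1 (Or.inl rfl) (Or.inl rfl) (x (1,0)) (x (1,1)) (x (0,0)) (x (0,1))).trans_eq ?_; ring1)
      | (refine (sos 1 (-1) (Or.inl rfl) (Or.inr rfl) (x (1,0)) (x (1,1)) (x (0,0)) (x (0,1))).trans_eq ?_; ring1)
      | (refine (sos (-1) 1 (Or.inr rfl) (Or.inl rfl) (x (1,0)) (x (1,1)) (x (0,0)) (x (0,1))).trans_eq ?_; ring1)
      | (refine (sos (-1) (-1) (Or.inr rfl) (Or.inr rfl) (x (1,0)) (x (1,1)) (x (0,0)) (x (0,1))).trans_eq ?_; ring1)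
      | (refine (sos 1 1 (Or.inl rfl) (Or.inl rfl) (x (1,1)) (x (1,0)) (x (0,1)) (x (0,0))).trans_eq ?_; ring1)
      | (refine (sos 1 (-1) (Or.inl rfl) (Or.inr rfl) (x (1,1)) (x (1,0)) (x (0,1)) (x (0,0))).trans_eq ?_; ring1)
      | (refine (sos (-1) 1 (Or.inr rfl) (Or.inl rfl) (x (1,1)) (x (1,0)) (x (0,1)) (x (0,0))).trans_eq ?_; ring1)
      | (refine (sos (-1) (-1) (Or.inr rfl) (Or.inr rfl) (x (1,1)) (x (1,0)) (x (0,1)) (x (0,0))).trans_eq ?_; ring1)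


lemma trace_smul_sum (P : Matrix (Fin 2 × Fin 2) (Fin 2 × Fin 2) ℂ)
    (c : Bool × Bool × Bool → ℝ) :
    (Matrix.trace (P * ∑ s : Bool × Bool × Bool, ((c s : ℝ) : ℂ) • pairEns s)).re
      = ∑ s : Bool × Bool × Bool, c s * (Matrix.trace (P * pairEns s)).re := by
  rw [Matrix.mul_sum, Matrix.trace_sum]
  rw [Complex.re_sum]
  refine Finset.sum_congr rfl fun s _ => ?_
  rw [Matrix.mul_smul, Matrix.trace_smul, smul_eq_mul, Complex.re_ofReal_mul]


lemma val_le_34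
    (P : ((Bool × Bool) × (Bool × Bool)) → Matrix (Fin 2 × Fin 2) (Fin 2 × Fin 2) ℂ)
    (hP : ∀ a, (P a).PosSemidef)
    (hZ : 0 < ∑ s : Bool × Bool × Bool, ∑ a : (Bool × Bool) × (Bool × Bool),
      (Matrix.trace (P a * pairEns s)).re) :
    (∑ s : Bool × Bool × Bool, ∑ a : (Bool × Bool) × (Bool × Bool),
        ((Matrix.trace (P a * pairEns s)).re
          / (∑ s' : Bool × Bool × Bool, ∑ a' : (Bool × Bool) × (Bool × Bool),
              (Matrix.trace (P a' * pairEns s')).re))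
          * (sigmaX s a.1 * sigmaZ s a.2)) ≤ 3/4 := by
  have key : ∀ a : (Bool × Bool) × (Bool × Bool),
      0 ≤ ∑ s : Bool × Bool × Bool,
        (3/4 - sigmaX s a.1 * sigmaZ s a.2) * (Matrix.trace (P a * pairEns s)).re := by
    intro a
    rw [← trace_smul_sum]
    exact (Complex.le_def.mp (trace_mul_psd_nonneg (hP a) (Dpsd a))).1
  have hval : (∑ s : Bool × Bool × Bool, ∑ a : (Bool × Bool) × (Bool × Bool),
      ((Matrix.trace (P a * pairEns s)).re
        / (∑ s' : Bool × Bool × Bool, ∑ a' : (Bool × Bool) × (Bool × Bool),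
            (Matrix.trace (P a' * pairEns s')).re))
        * (sigmaX s a.1 * sigmaZ s a.2))
      = (∑ s : Bool × Bool × Bool, ∑ a : (Bool × Bool) × (Bool × Bool),
          (Matrix.trace (P a * pairEns s)).re * (sigmaX s a.1 * sigmaZ s a.2))
        / (∑ s : Bool × Bool × Bool, ∑ a : (Bool × Bool) × (Bool × Bool),
            (Matrix.trace (P a * pairEns s)).re) := by
    rw [Finset.sum_div]
    refine Finset.sum_congr rfl fun s _ => ?_
    rw [Finset.sum_div]
    refine Finset.sum_congr rfl fun a _ => ?_
    rw [div_mul_eq_mul_div]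
  rw [hval, div_le_iff₀ hZ]
  rw [Finset.sum_comm]
  conv_rhs => rw [Finset.sum_comm]
  rw [Finset.mul_sum]
  refine Finset.sum_le_sum fun a _ => ?_
  have h := key a
  rw [Finset.mul_sum]
  have expand : ∑ s : Bool × Bool × Bool,
      (3/4 - sigmaX s a.1 * sigmaZ s a.2) * (Matrix.trace (P a * pairEns s)).re
      = ∑ s : Bool × Bool × Bool, (3/4 * (Matrix.trace (P a * pairEns s)).re
        - (Matrix.trace (P a * pairEns s)).re * (sigmaX s a.1 * sigmaZ s a.2)) := by
    refine Finset.sum_congr rfl fun s _ => ?_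
    ring
  rw [expand, Finset.sum_sub_distrib] at h
  linarith


noncomputable def phi : Fin 2 × Fin 2 → ℂ :=
  fun p => if p.1 = 0 then (if p.2 = 0 then 2 else 1) else (if p.2 = 0 then 1 else 0)

lemma star_phi : star phi = phi := by
  funext p
  obtain ⟨i, j⟩ := p
  fin_cases i <;> fin_cases j <;> simp [phi]

lemma posSemidef_outer (u : Fin 2 × Fin 2 → ℂ) :
    (Matrix.vecMulVec u (star u)).PosSemidef := by
  refine Matrix.PosSemidef.of_dotProduct_mulVec_nonneg ?_ ?_
  · ext p q
    simp only [Matrix.conjTranspose_apply, Matrix.vecMulVec_apply, Pi.star_apply, star_mul',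
      star_star]
    exact mul_comm _ _
  · intro x
    have h : Matrix.vecMulVec u (star u) *ᵥ x = (star u ⬝ᵥ x) • u := by
      funext i
      simp only [Matrix.mulVec, dotProduct, Matrix.vecMulVec_apply, Pi.smul_apply,
        Pi.star_apply, smul_eq_mul, Finset.sum_mul, Finset.mul_sum]
      refine Finset.sum_congr rfl fun j _ => ?_
      ring
    rw [h, dotProduct_smul, smul_eq_mul, Matrix.star_dotProduct]
    exact star_mul_self_nonneg _

lemma trP0 (s : Bool × Bool × Bool) :
    Matrix.trace (Matrix.vecMulVec phi (star phi) * pairEns s)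
      = (((if s.2.1 = false ∧ s.2.2 = false then (9:ℝ)/16 else 1/16) : ℝ) : ℂ) := by
  obtain ⟨w, z, xb⟩ := s
  rw [pairEns_eq, star_phi]
  cases w <;> cases z <;> cases xb <;>
    norm_num [Matrix.trace, Matrix.diag, Matrix.mul_apply, Matrix.vecMulVec_apply,
      Matrix.smul_apply, Fintype.sum_prod_type, Fin.sum_univ_two, phi, intKet, zket, xsgn,
      intKet_real]

noncomputable def P0 : ((Bool × Bool) × (Bool × Bool)) → Matrix (Fin 2 × Fin 2) (Fin 2 × Fin 2) ℂ :=
  fun a => if a = ((false, false), (false, false)) then Matrix.vecMulVec phi (star phi) else 0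

lemma P0_psd (a : (Bool × Bool) × (Bool × Bool)) : (P0 a).PosSemidef := by
  rw [P0]
  split_ifs
  · exact posSemidef_outer phi
  · exact Matrix.PosSemidef.zero

lemma normZ_P0 : normZ pairEns P0 = 3/2 := by
  rw [normZ]
  simp only [P0, ite_mul, Matrix.zero_mul, apply_ite Matrix.trace, Matrix.trace_zero,
    apply_ite Complex.re, Complex.zero_re, Finset.sum_ite_eq', Finset.mem_univ, if_true]
  simp only [trP0, Complex.ofReal_re, Fintype.sum_prod_type, Fintype.sum_bool]
  norm_num

lemma val_P0 :
    val pairEns (fun s (a : (Bool × Bool) × (Bool × Bool)) => sigmaX s a.1 * sigmaZ s a.2) P0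
      = 3/4 := by
  rw [val]
  simp only [induced, normZ_P0]
  simp only [P0, ite_mul, Matrix.zero_mul, apply_ite Matrix.trace, Matrix.trace_zero,
    apply_ite Complex.re, Complex.zero_re]
  simp only [Fintype.sum_prod_type, Fintype.sum_bool, trP0, Complex.ofReal_re,
    sigmaX, sigmaZ]
  norm_num

/-- Value of the conjunction qubit-pair game `G_∧`, with utility
`σ_∧(s,(a_X,a_Z)) = σ_X(s,a_X)·σ_Z(s,a_Z)`: the selective value is `3/4`. -/
theorem conjunction_game_value :
    sel pairEns
      (fun s (a : (Bool × Bool) × (Bool × Bool)) => sigmaX s a.1 * sigmaZ s a.2) =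
      3/4 := by
  rw [sel]
  refine IsGreatest.csSup_eq ⟨⟨P0, P0_psd, by rw [normZ_P0]; norm_num, val_P0.symm⟩, ?_⟩
  rintro v ⟨P, hP, hZ, rfl⟩
  rw [val]
  simp only [induced, normZ] at *
  exact val_le_34 P hP hZ
end

section
/- (Value of the averaged qubit-pair game) Consider the weighted quantum retrieval game G_avg = (ϱ, σ_avg) on ℂ⁴ with the eight-state qubit-pair ensemble, answer set A = {0,1}²×{0,1}², and utility σ_avg(s, (a_X, a_Z)) = (σ_X(s, a_X) + σ_Z(s, a_Z))/2. Then Sel(G_avg) = 1/2 + 1/√8 (equivalently 1/2 + √2/4), the optimal fidelity for covariant qubit cloning. -/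
open Matrix
open scoped ComplexOrder
open scoped ComplexOrder

open QRG

/- ------------------------------------------------------------------ -/
/- Auxiliary development for the proof of `averaged_game_value`.      -/
/- ------------------------------------------------------------------ -/

namespace QRGaux

open scoped Kronecker

set_option maxHeartbeats 1000000

noncomputable section

def rt : ℝ := Real.sqrt 2
def ee (b : Bool) : ℝ := if b then -1 else 1
def Nm (z : Bool) : ℝ := 4 + 2*rt*ee z
def Np (z : Bool) : ℝ := 4 - 2*rt*ee z
def wm (z x : Bool) : Fin 2 → ℂ := ![((ee x : ℝ) : ℂ), ((-rt - ee z : ℝ) : ℂ)]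
def wp (z x : Bool) : Fin 2 → ℂ := ![((ee x : ℝ) : ℂ), ((rt - ee z : ℝ) : ℂ)]
def cc : ℝ := 1/2 + Real.sqrt 2 / 4
def outer2 (u : Fin 2 → ℂ) := Matrix.vecMulVec u (star u)
def pv (u v : Fin 2 → ℂ) : Fin 2 × Fin 2 → ℂ := fun p => u p.1 * v p.2

lemma rt_nonneg : (0:ℝ) ≤ rt := Real.sqrt_nonneg 2
lemma rt_sq : rt ^ 2 = 2 := Real.sq_sqrt (by norm_num)
lemma rtC_sq : ((rt:ℝ):ℂ) ^ 2 = 2 := by rw [← Complex.ofReal_pow, rt_sq]; norm_num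
lemma rtC_cube : ((rt:ℝ):ℂ) ^ 3 = 2 * ((rt:ℝ):ℂ) := by rw [pow_succ, rtC_sq]
lemma rtC_p4 : ((rt:ℝ):ℂ) ^ 4 = 4 := by
  rw [show (4:ℕ) = 2*2 from rfl, pow_mul, rtC_sq]; norm_num
lemma rtC_inv_sq : (((rt:ℝ):ℂ))⁻¹ ^ 2 = (2:ℂ)⁻¹ := by rw [inv_pow, rtC_sq]
lemma Nm_pos (z : Bool) : 0 < Nm z := by
  rcases z <;> simp [Nm, ee] <;> nlinarith [rt_sq, rt_nonneg]
lemma Np_pos (z : Bool) : 0 < Np z := by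
  rcases z <;> simp [Np, ee] <;> nlinarith [rt_sq, rt_nonneg]

lemma spec1 (z x : Bool) :
    ((Nm z : ℝ) : ℂ) • (((2*cc : ℝ) : ℂ) • (1 : Matrix (Fin 2) (Fin 2) ℂ))
      = ((Nm z : ℝ):ℂ) • outer2 (zket z) + ((Nm z : ℝ):ℂ) • outer2 (xket x)
        + ((rt : ℝ) : ℂ) • outer2 (wm z x) := by
  ext i j
  fin_cases i <;> fin_cases j <;> rcases z <;> rcases x <;>
    · simp only [outer2, Matrix.vecMulVec_apply, Matrix.one_apply, Matrix.smul_apply,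
        Matrix.add_apply, zket, xket, wm, cc, ee, Nm, Pi.star_apply, smul_eq_mul,
        Fin.isValue, RCLike.star_def, _root_.map_mul, map_inv₀, Complex.conj_ofReal,
        _root_.map_one, map_neg, Complex.ofReal_mul, Complex.ofReal_add, Complex.ofReal_sub,
        Complex.ofReal_neg, Complex.ofReal_div, Complex.ofReal_ofNat, Complex.ofReal_one]
      norm_num [show ((Real.sqrt 2 : ℝ):ℂ) = ((rt:ℝ):ℂ) from rfl]
      ring_nf
      simp only [rtC_sq, rtC_cube, rtC_p4, rtC_inv_sq]
      ring_nf

lemma res1 (z x : Bool) :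
    ((Np z * Nm z : ℝ) : ℂ) • (1 : Matrix (Fin 2) (Fin 2) ℂ)
      = ((Nm z : ℝ):ℂ) • outer2 (wp z x) + ((Np z : ℝ):ℂ) • outer2 (wm z x) := by
  ext i j
  fin_cases i <;> fin_cases j <;> rcases z <;> rcases x <;>
    · simp only [outer2, Matrix.vecMulVec_apply, Matrix.one_apply, Matrix.smul_apply,
        Matrix.add_apply, wp, wm, ee, Nm, Np, Pi.star_apply, smul_eq_mul,
        Fin.isValue, RCLike.star_def, _root_.map_mul, map_inv₀, Complex.conj_ofReal,
        _root_.map_one, map_neg, Complex.ofReal_mul, Complex.ofReal_add, Complex.ofReal_sub,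
        Complex.ofReal_neg, Complex.ofReal_div, Complex.ofReal_ofNat, Complex.ofReal_one]
      norm_num
      ring_nf
      simp only [rtC_sq, rtC_cube, rtC_p4, rtC_inv_sq]
      ring_nf

lemma outer2_kron (u v : Fin 2 → ℂ) :
    outer2 u ⊗ₖ outer2 v = Matrix.vecMulVec (pv u v) (star (pv u v)) := by
  ext ⟨i,j⟩ ⟨k,l⟩
  simp [outer2, pv, Matrix.vecMulVec_apply]
  ring

lemma pairKet_false (zb xb : Bool) : pairKet (false, zb, xb) = pv (zket zb) (xket xb) := by
  funext p; simp [pairKet, pv]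

lemma pairKet_true (zb xb : Bool) : pairKet (true, zb, xb) = pv (xket xb) (zket zb) := by
  funext p; simp [pairKet, pv]

lemma ok_false (zb xb : Bool) :
    Matrix.vecMulVec (pairKet (false, zb, xb)) (star (pairKet (false, zb, xb)))
      = outer2 (zket zb) ⊗ₖ outer2 (xket xb) := by
  rw [pairKet_false, outer2_kron]

lemma ok_true (zb xb : Bool) :
    Matrix.vecMulVec (pairKet (true, zb, xb)) (star (pairKet (true, zb, xb)))
      = outer2 (xket xb) ⊗ₖ outer2 (zket zb) := by
  rw [pairKet_true, outer2_kron]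

lemma pzsum : outer2 (zket false) + outer2 (zket true) = 1 := by
  ext i j
  fin_cases i <;> fin_cases j <;>
    simp [outer2, Matrix.vecMulVec_apply, zket, Matrix.one_apply]

lemma pxsum : outer2 (xket false) + outer2 (xket true) = 1 := by
  ext i j
  fin_cases i <;> fin_cases j <;>
    simp [outer2, Matrix.vecMulVec_apply, xket, Matrix.one_apply,
        show ((Real.sqrt 2 : ℝ):ℂ) = ((rt:ℝ):ℂ) from rfl] <;>
    (ring_nf; simp only [rtC_sq, rtC_cube, rtC_p4, rtC_inv_sq]; ring_nf)

lemma sum_expand {M : Type*} [AddCommMonoid M] (f : Bool × Bool × Bool → M) :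
    ∑ s, f s = f (false,false,false) + f (false,false,true) + f (false,true,false)
      + f (false,true,true) + f (true,false,false) + f (true,false,true)
      + f (true,true,false) + f (true,true,true) := by
  simp [Fintype.sum_prod_type, Fintype.sum_bool]
  abel

lemma sumAll :
    ∑ s : Bool × Bool × Bool, Matrix.vecMulVec (pairKet s) (star (pairKet s))
      = (2:ℂ) • (1 : Matrix (Fin 2 × Fin 2) (Fin 2 × Fin 2) ℂ) := by
  rw [sum_expand]
  simp only [ok_false, ok_true]
  have h : (outer2 (zket false) + outer2 (zket true)) ⊗ₖ (outer2 (xket false) + outer2 (xket true))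
      + (outer2 (xket false) + outer2 (xket true)) ⊗ₖ (outer2 (zket false) + outer2 (zket true))
      = (2:ℂ) • (1 : Matrix (Fin 2 × Fin 2) (Fin 2 × Fin 2) ℂ) := by
    rw [pzsum, pxsum, Matrix.one_kronecker_one]
    module
  rw [← h]
  simp only [Matrix.add_kronecker, Matrix.kronecker_add]
  abel

lemma sumZ (z1 z2 : Bool) :
    ∑ s : Bool × Bool × Bool, ((sigmaZ s (z1, z2) : ℝ) : ℂ) • Matrix.vecMulVec (pairKet s) (star (pairKet s))
      = outer2 (zket z1) ⊗ₖ 1 + 1 ⊗ₖ outer2 (zket z2) := by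
  rw [sum_expand]
  simp only [ok_false, ok_true, sigmaZ]
  rw [← pxsum]
  rcases z1 <;> rcases z2 <;>
    · norm_num
      simp only [Matrix.add_kronecker, Matrix.kronecker_add]
      abel

lemma sumX (x1 x2 : Bool) :
    ∑ s : Bool × Bool × Bool, ((sigmaX s (x1, x2) : ℝ) : ℂ) • Matrix.vecMulVec (pairKet s) (star (pairKet s))
      = outer2 (xket x1) ⊗ₖ 1 + 1 ⊗ₖ outer2 (xket x2) := by
  rw [sum_expand]
  simp only [ok_false, ok_true, sigmaX]
  rw [← pzsum]
  rcases x1 <;> rcases x2 <;>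
    · norm_num
      simp only [Matrix.add_kronecker, Matrix.kronecker_add]
      abel

lemma decomp (x1 x2 z1 z2 : Bool) :
    ((Nm z1 * Np z1 * Nm z2 * Np z2 : ℝ):ℂ) • ∑ s : Bool × Bool × Bool,
        ((cc - (sigmaX s (x1,x2) + sigmaZ s (z1,z2)) / 2 : ℝ):ℂ) •
          Matrix.vecMulVec (pairKet s) (star (pairKet s))
      = ((rt * Np z1 * Nm z2 / 2 : ℝ):ℂ) •
          Matrix.vecMulVec (pv (wm z1 x1) (wp z2 x2)) (star (pv (wm z1 x1) (wp z2 x2)))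
        + ((rt * Nm z1 * Np z2 / 2 : ℝ):ℂ) •
          Matrix.vecMulVec (pv (wp z1 x1) (wm z2 x2)) (star (pv (wp z1 x1) (wm z2 x2)))
        + ((rt * Np z1 * Np z2 : ℝ):ℂ) •
          Matrix.vecMulVec (pv (wm z1 x1) (wm z2 x2)) (star (pv (wm z1 x1) (wm z2 x2))) := by
  have hsplit : ∑ s : Bool × Bool × Bool,
        ((cc - (sigmaX s (x1,x2) + sigmaZ s (z1,z2)) / 2 : ℝ):ℂ) •
          Matrix.vecMulVec (pairKet s) (star (pairKet s))
      = ((cc : ℝ):ℂ) • (∑ s : Bool × Bool × Bool, Matrix.vecMulVec (pairKet s) (star (pairKet s)))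
        - (1/2 : ℂ) • (∑ s : Bool × Bool × Bool, ((sigmaX s (x1,x2) : ℝ):ℂ) • Matrix.vecMulVec (pairKet s) (star (pairKet s)))
        - (1/2 : ℂ) • (∑ s : Bool × Bool × Bool, ((sigmaZ s (z1,z2) : ℝ):ℂ) • Matrix.vecMulVec (pairKet s) (star (pairKet s))) := by
    rw [Finset.smul_sum, Finset.smul_sum, Finset.smul_sum, ← Finset.sum_sub_distrib,
      ← Finset.sum_sub_distrib]
    refine Finset.sum_congr rfl fun s _ => ?_
    push_cast
    module
  rw [hsplit, sumAll, sumX, sumZ]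
  have h1 := congrArg (fun B => B ⊗ₖ (1 : Matrix (Fin 2) (Fin 2) ℂ)) (spec1 z1 x1)
  have h2 := congrArg (fun B => (1 : Matrix (Fin 2) (Fin 2) ℂ) ⊗ₖ B) (spec1 z2 x2)
  have h3 := congrArg (fun B => outer2 (wm z1 x1) ⊗ₖ B) (res1 z2 x2)
  have h4 := congrArg (fun B => B ⊗ₖ outer2 (wm z2 x2)) (res1 z1 x1)
  simp only [Matrix.add_kronecker, Matrix.kronecker_add, Matrix.smul_kronecker,
    Matrix.kronecker_smul, Matrix.one_kronecker_one, outer2_kron] at h1 h2 h3 h4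
  push_cast at h1 h2 h3 h4 ⊢
  linear_combination (norm := module)
    ((Np z1 : ℝ):ℂ) • (((Nm z2 : ℝ):ℂ) • (((Np z2 : ℝ):ℂ) • ((1/2 : ℂ) • h1)))
    + ((Nm z1 : ℝ):ℂ) • (((Np z1 : ℝ):ℂ) • (((Np z2 : ℝ):ℂ) • ((1/2 : ℂ) • h2)))
    + ((rt : ℝ):ℂ) • (((Np z1 : ℝ):ℂ) • ((1/2 : ℂ) • h3))
    + ((rt : ℝ):ℂ) • (((Np z2 : ℝ):ℂ) • ((1/2 : ℂ) • h4))

abbrev M4 := Matrix (Fin 2 × Fin 2) (Fin 2 × Fin 2) ℂ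

lemma trace_outer (Q : M4) (v : Fin 2 × Fin 2 → ℂ) :
    Matrix.trace (Q * Matrix.vecMulVec v (star v)) = star v ⬝ᵥ Q *ᵥ v := by
  simp [Matrix.trace, Matrix.mul_apply, Matrix.vecMulVec_apply, Matrix.mulVec,
    dotProduct, Finset.mul_sum, Matrix.diag]
  exact Finset.sum_congr rfl fun p _ => Finset.sum_congr rfl fun q _ => by ring

lemma quad_nonneg {Q : M4} (hQ : Q.PosSemidef) (v : Fin 2 × Fin 2 → ℂ) :
    0 ≤ (star v ⬝ᵥ Q *ᵥ v).re := by
  have := hQ.re_dotProduct_nonneg v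
  simpa using this

lemma key (Q : M4) (hQ : Q.PosSemidef) (x1 x2 z1 z2 : Bool) :
    ∑ s : Bool × Bool × Bool,
        (sigmaX s (x1,x2) + sigmaZ s (z1,z2)) / 2 * (Matrix.trace (Q * pairEns s)).re
      ≤ cc * ∑ s : Bool × Bool × Bool, (Matrix.trace (Q * pairEns s)).re := by
  have htr : ∀ s, (Matrix.trace (Q * pairEns s)).re
      = (1/8) * (Matrix.trace (Q * Matrix.vecMulVec (pairKet s) (star (pairKet s)))).re := by
    intro s
    rw [pairEns, Matrix.mul_smul, Matrix.trace_smul,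
      show ((1:ℂ)/8) = ((1/8 : ℝ) : ℂ) by norm_num, smul_eq_mul, Complex.re_ofReal_mul]
  have hD := congrArg (fun B => (Matrix.trace (Q * B)).re) (decomp x1 x2 z1 z2)
  simp only [Matrix.mul_smul, Matrix.trace_smul, Matrix.mul_add, Matrix.trace_add,
    Matrix.mul_sum, Matrix.trace_sum, smul_eq_mul, Complex.re_ofReal_mul,
    Complex.add_re, Complex.re_sum] at hD
  have hq : ∀ u v : Fin 2 → ℂ,
      0 ≤ (Matrix.trace (Q * Matrix.vecMulVec (pv u v) (star (pv u v)))).re := by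
    intro u v
    rw [trace_outer]
    exact quad_nonneg hQ _
  have hco : ∀ z1' z2' : Bool, (0:ℝ) ≤ rt * Np z1' * Nm z2' / 2 := by
    intro z1' z2'
    have := Np_pos z1'; have := Nm_pos z2'
    have h1 : 0 ≤ rt * Np z1' := mul_nonneg rt_nonneg (le_of_lt ‹0 < Np z1'›)
    nlinarith
  have hco3 : (0:ℝ) ≤ rt * Np z1 * Np z2 := by
    have := Np_pos z1; have := Np_pos z2
    have h1 : 0 ≤ rt * Np z1 := mul_nonneg rt_nonneg (le_of_lt ‹0 < Np z1›)
    nlinarith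
  have hRHSnn : 0 ≤ (Nm z1 * Np z1 * Nm z2 * Np z2) *
      ∑ s : Bool × Bool × Bool,
        (cc - (sigmaX s (x1,x2) + sigmaZ s (z1,z2)) / 2) *
          (Matrix.trace (Q * Matrix.vecMulVec (pairKet s) (star (pairKet s)))).re := by
    rw [hD]
    have a1 := mul_nonneg (hco z1 z2) (hq (wm z1 x1) (wp z2 x2))
    have a2 := mul_nonneg (by
      have := Np_pos z2; have := Nm_pos z1
      have h1 : 0 ≤ rt * Nm z1 := mul_nonneg rt_nonneg (le_of_lt ‹0 < Nm z1›)
      nlinarith : (0:ℝ) ≤ rt * Nm z1 * Np z2 / 2) (hq (wp z1 x1) (wm z2 x2))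
    have a3 := mul_nonneg hco3 (hq (wm z1 x1) (wm z2 x2))
    linarith
  have hDpos : 0 < Nm z1 * Np z1 * Nm z2 * Np z2 :=
    mul_pos (mul_pos (mul_pos (Nm_pos z1) (Np_pos z1)) (Nm_pos z2)) (Np_pos z2)
  have hmain : 0 ≤ ∑ s : Bool × Bool × Bool,
      (cc - (sigmaX s (x1,x2) + sigmaZ s (z1,z2)) / 2) *
        (Matrix.trace (Q * Matrix.vecMulVec (pairKet s) (star (pairKet s)))).re :=
    nonneg_of_mul_nonneg_right hRHSnn hDpos
  have hexp : ∑ s : Bool × Bool × Bool,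
        (cc - (sigmaX s (x1,x2) + sigmaZ s (z1,z2)) / 2) *
          (Matrix.trace (Q * Matrix.vecMulVec (pairKet s) (star (pairKet s)))).re
      = cc * (∑ s : Bool × Bool × Bool,
          (Matrix.trace (Q * Matrix.vecMulVec (pairKet s) (star (pairKet s)))).re)
        - ∑ s : Bool × Bool × Bool,
            (sigmaX s (x1,x2) + sigmaZ s (z1,z2)) / 2 *
              (Matrix.trace (Q * Matrix.vecMulVec (pairKet s) (star (pairKet s)))).re := by
    rw [Finset.mul_sum, ← Finset.sum_sub_distrib]
    exact Finset.sum_congr rfl fun s _ => by ring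
  rw [hexp] at hmain
  simp only [htr]
  have e1 : ∑ s : Bool × Bool × Bool,
        (sigmaX s (x1,x2) + sigmaZ s (z1,z2)) / 2 *
          ((1/8) * (Matrix.trace (Q * Matrix.vecMulVec (pairKet s) (star (pairKet s)))).re)
      = (1/8) * ∑ s : Bool × Bool × Bool,
          (sigmaX s (x1,x2) + sigmaZ s (z1,z2)) / 2 *
            (Matrix.trace (Q * Matrix.vecMulVec (pairKet s) (star (pairKet s)))).re := by
    rw [Finset.mul_sum]
    exact Finset.sum_congr rfl fun s _ => by ring
  have e2 : cc * ∑ s : Bool × Bool × Bool,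
        ((1/8) * (Matrix.trace (Q * Matrix.vecMulVec (pairKet s) (star (pairKet s)))).re)
      = (1/8) * (cc * ∑ s : Bool × Bool × Bool,
          (Matrix.trace (Q * Matrix.vecMulVec (pairKet s) (star (pairKet s)))).re) := by
    rw [← Finset.mul_sum]
    ring
  rw [e1, e2]
  have : ∑ s : Bool × Bool × Bool,
        (sigmaX s (x1,x2) + sigmaZ s (z1,z2)) / 2 *
          (Matrix.trace (Q * Matrix.vecMulVec (pairKet s) (star (pairKet s)))).re
      ≤ cc * ∑ s : Bool × Bool × Bool,
          (Matrix.trace (Q * Matrix.vecMulVec (pairKet s) (star (pairKet s)))).re := by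
    linarith
  linarith

end

end QRGaux
namespace QRGaux

noncomputable section

lemma rtC_inv_eq : (((rt:ℝ):ℂ))⁻¹ = ((rt:ℝ):ℂ)/2 := by
  have h : ((rt:ℝ):ℂ) ≠ 0 := by
    simp only [ne_eq, Complex.ofReal_eq_zero]
    nlinarith [rt_sq]
  field_simp
  rw [rtC_sq]

lemma ub (P : ((Bool × Bool) × (Bool × Bool)) → M4)
    (hP : ∀ a, (P a).PosSemidef) (hZ : 0 < QRG.normZ pairEns P) :
    QRG.val pairEns
      (fun s (a : (Bool × Bool) × (Bool × Bool)) =>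
        (sigmaX s a.1 + sigmaZ s a.2) / 2) P ≤ cc := by
  have hval : QRG.val pairEns
      (fun s (a : (Bool × Bool) × (Bool × Bool)) =>
        (sigmaX s a.1 + sigmaZ s a.2) / 2) P
      = (∑ a : (Bool × Bool) × (Bool × Bool), ∑ s : Bool × Bool × Bool,
          (sigmaX s a.1 + sigmaZ s a.2) / 2 * (Matrix.trace (P a * pairEns s)).re)
        / QRG.normZ pairEns P := by
    rw [QRG.val, Finset.sum_comm, Finset.sum_div]
    refine Finset.sum_congr rfl fun a _ => ?_
    rw [Finset.sum_div]
    refine Finset.sum_congr rfl fun s _ => ?_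
    rw [QRG.induced]
    ring
  rw [hval, div_le_iff₀ hZ]
  have hZ' : QRG.normZ pairEns P
      = ∑ a : (Bool × Bool) × (Bool × Bool), ∑ s : Bool × Bool × Bool,
          (Matrix.trace (P a * pairEns s)).re := by
    rw [QRG.normZ, Finset.sum_comm]
  rw [hZ', Finset.mul_sum]
  refine Finset.sum_le_sum fun a _ => ?_
  obtain ⟨⟨x1, x2⟩, ⟨z1, z2⟩⟩ := a
  exact key (P _) (hP _) x1 x2 z1 z2

/-- The optimal state: `wp false false ⊗ wp false false`. -/
def vopt : Fin 2 × Fin 2 → ℂ := pv (wp false false) (wp false false)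

def a0 : (Bool × Bool) × (Bool × Bool) := ((false, false), (false, false))

def Popt : ((Bool × Bool) × (Bool × Bool)) → M4 :=
  fun a => if a = a0 then Matrix.vecMulVec vopt (star vopt) else 0

lemma quad_outer (v k : Fin 2 × Fin 2 → ℂ) :
    star k ⬝ᵥ (Matrix.vecMulVec v (star v)) *ᵥ k = (star k ⬝ᵥ v) * (star v ⬝ᵥ k) := by
  simp only [dotProduct, Matrix.mulVec, Matrix.vecMulVec_apply, Pi.star_apply,
    Finset.mul_sum, Finset.sum_mul]
  rw [Finset.sum_comm]
  refine Finset.sum_congr rfl fun p _ => Finset.sum_congr rfl fun q _ => by ring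

lemma outer_psd (v : Fin 2 × Fin 2 → ℂ) : (Matrix.vecMulVec v (star v)).PosSemidef := by
  refine Matrix.PosSemidef.of_dotProduct_mulVec_nonneg ?_ ?_
  · ext i j
    simp [Matrix.conjTranspose_apply, Matrix.vecMulVec_apply, mul_comm]
  · intro x
    have h1 : star x ⬝ᵥ (Matrix.vecMulVec v (star v)) *ᵥ x
        = (star x ⬝ᵥ v) * (star v ⬝ᵥ x) := quad_outer v x
    have h2 : star (star v ⬝ᵥ x) = star x ⬝ᵥ v := by
      rw [Matrix.star_dotProduct, star_star]
    rw [h1, ← h2]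
    exact star_mul_self_nonneg _

lemma Popt_psd (a : (Bool × Bool) × (Bool × Bool)) : (Popt a).PosSemidef := by
  rw [Popt]
  split
  · exact outer_psd vopt
  · exact Matrix.PosSemidef.zero

def ov (b : Bool) : ℝ := if b then rt - 1 else 1

lemma overlap1 (w zb xb : Bool) :
    star (pairKet (w, zb, xb)) ⬝ᵥ vopt = ((ov zb * ov xb : ℝ) : ℂ) := by
  rcases w <;> rcases zb <;> rcases xb <;>
    · simp only [dotProduct, Fintype.sum_prod_type, Fin.sum_univ_two, pairKet, vopt,
        pv, wp, zket, xket, ov, ee, Pi.star_apply, RCLike.star_def, _root_.map_mul,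
        map_inv₀, Complex.conj_ofReal, _root_.map_one, map_neg,
        Matrix.cons_val_zero, Matrix.cons_val_one, Matrix.head_cons]
      norm_num [show ((Real.sqrt 2 : ℝ):ℂ) = ((rt:ℝ):ℂ) from rfl]
      push_cast
      try ring_nf
      try simp only [rtC_inv_eq]
      try ring_nf
      try simp only [rtC_sq, rtC_cube, rtC_p4]
      try ring_nf
      try norm_num

lemma overlap2 (w zb xb : Bool) :
    star vopt ⬝ᵥ pairKet (w, zb, xb) = ((ov zb * ov xb : ℝ) : ℂ) := by
  have h : star (star (pairKet (w, zb, xb)) ⬝ᵥ vopt)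
      = star vopt ⬝ᵥ pairKet (w, zb, xb) := by
    rw [Matrix.star_dotProduct, star_star]
  rw [← h, overlap1]
  exact Complex.conj_ofReal _

lemma traceV (w zb xb : Bool) :
    (Matrix.trace (Matrix.vecMulVec vopt (star vopt) * pairEns (w, zb, xb))).re
      = (1/8) * (ov zb * ov xb)^2 := by
  rw [pairEns, Matrix.mul_smul, Matrix.trace_smul,
    show ((1:ℂ)/8) = ((1/8 : ℝ) : ℂ) by norm_num, smul_eq_mul, Complex.re_ofReal_mul,
    trace_outer, quad_outer, overlap1, overlap2]
  rw [← Complex.ofReal_mul, Complex.ofReal_re]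
  ring

end

end QRGaux
namespace QRGaux

noncomputable section

lemma rt3 : rt^3 = 2*rt := by rw [pow_succ, rt_sq]
lemma rt4 : rt^4 = 4 := by rw [show (4:ℕ) = 2*2 from rfl, pow_mul, rt_sq]; norm_num
lemma rt5 : rt^5 = 4*rt := by rw [pow_succ, rt4]
lemma rt6 : rt^6 = 8 := by rw [pow_succ, rt5, mul_assoc, ← pow_two, rt_sq]; norm_num

lemma collapse (s : Bool × Bool × Bool) :
    ∑ a : (Bool × Bool) × (Bool × Bool), (Matrix.trace (Popt a * pairEns s)).re
      = (Matrix.trace (Matrix.vecMulVec vopt (star vopt) * pairEns s)).re := by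
  rw [Finset.sum_eq_single a0]
  · simp [Popt]
  · intro b _ hb
    simp [Popt, hb]
  · intro h
    exact absurd (Finset.mem_univ _) h

lemma normZval : QRG.normZ pairEns Popt = 6 - 4*rt := by
  rw [QRG.normZ]
  calc ∑ s : Bool × Bool × Bool, ∑ a : (Bool × Bool) × (Bool × Bool),
        (Matrix.trace (Popt a * pairEns s)).re
      = ∑ s : Bool × Bool × Bool,
        (Matrix.trace (Matrix.vecMulVec vopt (star vopt) * pairEns s)).re :=
        Finset.sum_congr rfl fun s _ => collapse s
    _ = 6 - 4*rt := by
        rw [sum_expand (fun s => (Matrix.trace (Matrix.vecMulVec vopt (star vopt) * pairEns s)).re)]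
        simp only [traceV, ov]
        norm_num
        nlinarith [rt_sq, rt3, rt4]

lemma normZpos : 0 < QRG.normZ pairEns Popt := by
  rw [normZval]
  nlinarith [rt_sq, rt_nonneg]

lemma valopt : QRG.val pairEns
    (fun s (a : (Bool × Bool) × (Bool × Bool)) =>
      (sigmaX s a.1 + sigmaZ s a.2) / 2) Popt = cc := by
  rw [QRG.val]
  have hcollapse : ∀ s : Bool × Bool × Bool,
      ∑ a : (Bool × Bool) × (Bool × Bool),
        QRG.induced pairEns Popt s a * ((sigmaX s a.1 + sigmaZ s a.2) / 2)
      = ((Matrix.trace (Matrix.vecMulVec vopt (star vopt) * pairEns s)).re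
          / QRG.normZ pairEns Popt) * ((sigmaX s a0.1 + sigmaZ s a0.2) / 2) := by
    intro s
    rw [Finset.sum_eq_single a0]
    · simp [QRG.induced, Popt]
    · intro b _ hb
      simp [QRG.induced, Popt, hb]
    · intro h
      exact absurd (Finset.mem_univ _) h
  rw [Finset.sum_congr rfl fun s _ => hcollapse s]
  rw [sum_expand (fun s => ((Matrix.trace (Matrix.vecMulVec vopt (star vopt) * pairEns s)).re
      / QRG.normZ pairEns Popt) * ((sigmaX s a0.1 + sigmaZ s a0.2) / 2))]
  simp only [traceV, normZval, ov, a0, sigmaX, sigmaZ]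
  norm_num [cc, show Real.sqrt 2 = rt from rfl]
  have h6 : (6:ℝ) - 4*rt ≠ 0 := by nlinarith [rt_sq, rt_nonneg]
  field_simp
  nlinarith [rt_sq, rt3, rt4, rt5, rt6]

end

end QRGaux

/-- Value of the averaged qubit-pair game `G_avg`, with utility
`σ_avg(s,(a_X,a_Z)) = (σ_X(s,a_X) + σ_Z(s,a_Z))/2`: the selective value is
`1/2 + 1/√8 = 1/2 + √2/4`, the optimal fidelity for covariant qubit cloning. -/
theorem averaged_game_value :
    sel pairEns
      (fun s (a : (Bool × Bool) × (Bool × Bool)) =>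
        (sigmaX s a.1 + sigmaZ s a.2) / 2) =
      1/2 + Real.sqrt 2 / 4 := by
  have hcc : (1/2 + Real.sqrt 2 / 4 : ℝ) = QRGaux.cc := rfl
  rw [sel]
  apply IsGreatest.csSup_eq
  constructor
  · exact ⟨QRGaux.Popt, QRGaux.Popt_psd, QRGaux.normZpos, by rw [QRGaux.valopt, hcc]⟩
  · rintro v ⟨P, hP, hZ, rfl⟩
    rw [hcc]
    exact QRGaux.ub P hP hZ
end

section
/- (Impossibility of quantum multiplexing of two classical bits) Let d ≥ 1 and for each α, β ∈ {0,1} let ρ_{α,β} be a d×d density matrix (positive semidefinite with trace 1). Let {P^a_0, P^a_1} and {P^b_0, P^b_1} be projective measurements on ℂ^d, i.e., orthogonal projections with P^a_0 + P^a_1 = 1 and P^b_0 + P^b_1 = 1. Suppose ε ∈ [0,1] is such that Tr[P^a_α · ρ_{α,β}] ≥ 1−ε and Tr[P^b_β · ρ_{α,β}] ≥ 1−ε for all α, β ∈ {0,1}. Then for all α, β ∈ {0,1}, the sequential measurement succeeds at recovering both bits with probability Tr[P^a_α · P^b_β · P^a_α · ρ_{α,β}] ≥ 1 − 2ε − 2√ε.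 -/
open Matrix
open scoped ComplexOrder

lemma trace_re_nonneg {n : Type*} [Fintype n] [DecidableEq n] {M : Matrix n n ℂ}
    (hM : M.PosSemidef) : 0 ≤ M.trace.re := by
  have h : ∀ i, 0 ≤ (M i i).re := fun i => by
    have := hM.re_dotProduct_nonneg (Pi.single i 1)
    simpa [dotProduct, mulVec, Pi.single_apply] using this
  rw [Matrix.trace, Complex.re_sum]
  exact Finset.sum_nonneg fun i _ => h i

lemma abs_re_trace_le {n : Type*} [Fintype n] (A B : Matrix n n ℂ) :
    |((Aᴴ * B).trace).re| ≤
      Real.sqrt ((Aᴴ * A).trace.re) * Real.sqrt ((Bᴴ * B).trace.re) := by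
  have key : ∀ (M : Matrix n n ℂ), ((Mᴴ * M).trace).re
      = ∑ i, ∑ j, ‖M j i‖ ^ 2 := by
    intro M
    simp only [Matrix.trace, Matrix.diag, Matrix.mul_apply, conjTranspose_apply,
      Complex.re_sum]
    refine Finset.sum_congr rfl fun i _ => Finset.sum_congr rfl fun j _ => ?_
    rw [Complex.star_def, ← Complex.normSq_eq_conj_mul_self, Complex.normSq_eq_norm_sq,
      Complex.ofReal_re]
  have h1 : |((Aᴴ * B).trace).re| ≤ ∑ i, ∑ j, ‖A j i‖ * ‖B j i‖ := by
    calc |((Aᴴ * B).trace).re| ≤ ‖(Aᴴ * B).trace‖ := Complex.abs_re_le_norm _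
    _ ≤ ∑ i, ‖(Aᴴ * B) i i‖ := by
        rw [Matrix.trace]; exact norm_sum_le _ _
    _ ≤ ∑ i, ∑ j, ‖A j i‖ * ‖B j i‖ := by
        refine Finset.sum_le_sum fun i _ => ?_
        rw [Matrix.mul_apply]
        refine (norm_sum_le _ _).trans ?_
        refine Finset.sum_le_sum fun j _ => ?_
        rw [conjTranspose_apply, norm_mul, Complex.star_def, Complex.norm_conj]
  rw [key, key, ← Fintype.sum_prod_type', ← Fintype.sum_prod_type']
  rw [← Fintype.sum_prod_type'] at h1
  refine h1.trans ?_
  exact Real.sum_mul_le_sqrt_mul_sqrt _ _ _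

lemma proj_psd {n : Type*} [Fintype n] {P : Matrix n n ℂ}
    (hH : P.IsHermitian) (h2 : P * P = P) : P.PosSemidef := by
  have : P = Pᴴ * P := by rw [hH.eq, h2]
  rw [this]; exact posSemidef_conjTranspose_mul_self P

lemma tr_cycle {n : Type*} [Fintype n] (X s : Matrix n n ℂ) :
    (s * X * s).trace = (X * (s * s)).trace := by
  rw [trace_mul_comm, ← mul_assoc, trace_mul_comm]

lemma cs_state {n : Type*} [Fintype n] (X Y s : Matrix n n ℂ) (hs : sᴴ = s) :
    |((Xᴴ * Y * (s * s)).trace).re| ≤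
      Real.sqrt (((Xᴴ * X) * (s * s)).trace.re) * Real.sqrt (((Yᴴ * Y) * (s * s)).trace.re) := by
  have e : ∀ (U V : Matrix n n ℂ), ((U * s)ᴴ * (V * s)).trace = ((Uᴴ * V) * (s * s)).trace := by
    intro U V
    rw [conjTranspose_mul, hs]
    rw [show s * Uᴴ * (V * s) = s * (Uᴴ * V) * s by noncomm_ring]
    exact tr_cycle _ _
  have h := abs_re_trace_le (X * s) (Y * s)
  rwa [e X Y, e X X, e Y Y] at h

/-- Impossibility of quantum multiplexing of two classical bits: if states
`ρ_{α,β}` allow recovering either bit `α` (via the projective measurement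
`{P^a_0, P^a_1}`) or bit `β` (via `{P^b_0, P^b_1}`) with probability at least
`1−ε`, then measuring the two measurements sequentially recovers both bits with
probability at least `1 − 2ε − 2√ε`. -/
theorem no_quantum_multiplexing (d : ℕ) (hd : 1 ≤ d)
    (ρ : Bool → Bool → Matrix (Fin d) (Fin d) ℂ)
    (hρpsd : ∀ α β, (ρ α β).PosSemidef) (hρtr : ∀ α β, (ρ α β).trace = 1)
    (Pa Pb : Bool → Matrix (Fin d) (Fin d) ℂ)
    (hPaH : ∀ α, (Pa α).IsHermitian) (hPa2 : ∀ α, Pa α * Pa α = Pa α)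
    (hPasum : Pa false + Pa true = 1)
    (hPbH : ∀ β, (Pb β).IsHermitian) (hPb2 : ∀ β, Pb β * Pb β = Pb β)
    (hPbsum : Pb false + Pb true = 1)
    (ε : ℝ) (hε : ε ∈ Set.Icc (0 : ℝ) 1)
    (ha : ∀ α β, 1 - ε ≤ (Matrix.trace (Pa α * ρ α β)).re)
    (hb : ∀ α β, 1 - ε ≤ (Matrix.trace (Pb β * ρ α β)).re) :
    ∀ α β, 1 - 2 * ε - 2 * Real.sqrt ε ≤
      (Matrix.trace (Pa α * Pb β * Pa α * ρ α β)).re := by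
  intro α β
  obtain ⟨hε0, hε1⟩ := hε
  set Q := Pa α with hQdef
  set R := Pb β with hRdef
  have hσ := hρpsd α β
  have hex : ∃ s : Matrix (Fin d) (Fin d) ℂ, sᴴ = s ∧ s * s = ρ α β := by
    open scoped MatrixOrder in
    exact ⟨CFC.sqrt (ρ α β), (CFC.sqrt_nonneg _).posSemidef.isHermitian,
      CFC.sqrt_mul_sqrt_self _ hσ.nonneg⟩
  obtain ⟨s, hsH, hss⟩ := hex
  have hQH : Qᴴ = Q := hPaH α
  have hRH : Rᴴ = R := hPbH β
  have hQ2 : Q * Q = Q := hPa2 α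
  have hR2 : R * R = R := hPb2 β
  have hQ'H : (1 - Q)ᴴ = 1 - Q := by rw [conjTranspose_sub, hQH, conjTranspose_one]
  have hQ'2 : (1 - Q) * (1 - Q) = 1 - Q := by
    rw [mul_sub, sub_mul, sub_mul, hQ2]; simp only [one_mul, mul_one]; abel
  have hR'H : (1 - R)ᴴ = 1 - R := by rw [conjTranspose_sub, hRH, conjTranspose_one]
  have hR'2 : (1 - R) * (1 - R) = 1 - R := by
    rw [mul_sub, sub_mul, sub_mul, hR2]; simp only [one_mul, mul_one]; abel
  -- nonneg trace of X * σ for psd X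
  have sandwich : ∀ (X : Matrix (Fin d) (Fin d) ℂ), X.PosSemidef →
      0 ≤ ((X * ρ α β).trace).re := by
    intro X hX
    have hpsd := hX.conjTranspose_mul_mul_same s
    rw [hsH] at hpsd
    have h := trace_re_nonneg hpsd
    rwa [tr_cycle, hss] at h
  -- trace of (1-X)*σ
  have trsub : ∀ (X : Matrix (Fin d) (Fin d) ℂ),
      (((1 - X) * ρ α β).trace).re = 1 - ((X * ρ α β).trace).re := by
    intro X
    rw [sub_mul, one_mul, trace_sub, Complex.sub_re, hρtr α β]
    simp
  have bQ' : (((1 - Q) * ρ α β).trace).re ≤ ε := by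
    rw [trsub]; linarith [ha α β]
  have bQ'0 : 0 ≤ (((1 - Q) * ρ α β).trace).re :=
    sandwich _ (proj_psd hQ'H hQ'2)
  have bR1 : ((R * ρ α β).trace).re ≤ 1 := by
    have := sandwich _ (proj_psd hR'H hR'2)
    rw [trsub] at this; linarith
  have bT1 : ((Q * R * Q * ρ α β).trace).re ≤ 1 := by
    have hpsd : (1 - Q * R * Q).PosSemidef := by
      have h1 : 1 - Q * R * Q = (1 - Q) + Q * (1 - R) * Q := by
        rw [show Q * (1 - R) * Q = Q * Q - Q * R * Q by noncomm_ring, hQ2]; abel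
      have h2 : Q * (1 - R) * Q = ((1 - R) * Q)ᴴ * ((1 - R) * Q) := by
        rw [conjTranspose_mul, hR'H, hQH,
          show Q * (1 - R) * ((1 - R) * Q) = Q * ((1 - R) * (1 - R)) * Q by noncomm_ring, hR'2]
      rw [h1, h2]
      exact (proj_psd hQ'H hQ'2).add (posSemidef_conjTranspose_mul_self _)
    have := sandwich _ hpsd
    rw [trsub] at this; linarith
  -- decomposition
  have mid : (Q * R * Q * ρ α β).trace.re
      = ((R * ρ α β).trace).re - (((R * (1 - Q)) * ρ α β).trace).re
        - ((((1 - Q) * (R * Q)) * ρ α β).trace).re := by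
    rw [show Q * R * Q * ρ α β
        = R * ρ α β - (R * (1 - Q)) * ρ α β - ((1 - Q) * (R * Q)) * ρ α β by noncomm_ring]
    rw [trace_sub, trace_sub, Complex.sub_re, Complex.sub_re]
  -- Cauchy-Schwarz bounds
  have sqε : Real.sqrt (((1 - Q) * ρ α β).trace.re) ≤ Real.sqrt ε :=
    Real.sqrt_le_sqrt bQ'
  have E1 : |(((R * (1 - Q)) * ρ α β).trace).re| ≤ Real.sqrt ε := by
    have h := cs_state R (1 - Q) s hsH
    rw [hRH, hQ'H, hss, hR2, hQ'2] at h
    calc |(((R * (1 - Q)) * ρ α β).trace).re|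
        ≤ Real.sqrt ((R * ρ α β).trace.re) * Real.sqrt (((1 - Q) * ρ α β).trace.re) := h
      _ ≤ 1 * Real.sqrt ε := by
          exact mul_le_mul (Real.sqrt_le_one.mpr bR1) sqε (Real.sqrt_nonneg _) zero_le_one
      _ = Real.sqrt ε := one_mul _
  have E2 : |((((1 - Q) * (R * Q)) * ρ α β).trace).re| ≤ Real.sqrt ε := by
    have h := cs_state (1 - Q) (R * Q) s hsH
    rw [hQ'H, hss, hQ'2, conjTranspose_mul, hRH, hQH,
      show Q * R * (R * Q) = Q * (R * R) * Q by noncomm_ring, hR2] at h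
    calc |((((1 - Q) * (R * Q)) * ρ α β).trace).re|
        ≤ Real.sqrt (((1 - Q) * ρ α β).trace.re) * Real.sqrt ((Q * R * Q * ρ α β).trace.re) := h
      _ ≤ Real.sqrt ε * 1 :=
          mul_le_mul sqε (Real.sqrt_le_one.mpr bT1) (Real.sqrt_nonneg _) (Real.sqrt_nonneg _)
      _ = Real.sqrt ε := mul_one _
  have hb' := hb α β
  rw [mid]
  have h1 := abs_le.mp E1
  have h2 := abs_le.mp E2
  linarith [h1.1, h1.2, h2.1, h2.2]
end
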